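/- arXiv:0908.4170 — 9 statements merged into one kernel-verified Lean document; each statement's English description precedes it below -/
import Mathlib

section
/- For a fixed integer n ≥ 2 and fixed ρ > 0, the quantity λ_d(ρ) = ∫₀^ρ d / √(cosh(u)^(2n-2) − d²) du tends to +∞ as d → 1⁻. -/
open Real MeasureTheory intervalIntegral Filter

private lemma exp_sub_one_le (t : ℝ) (ht : 0 ≤ t) : Real.exp t - 1 ≤ t * Real.exp t := by
  have h := Real.add_one_le_exp (-t)
  have h2 : Real.exp (-t) * Real.exp t = 1 := by
    rw [← Real.exp_add]; simp
  nlinarith [Real.exp_pos t]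

/-- The key quadratic upper bound: cosh u ^ m ≤ 1 + C u² on [0, ρ]. -/
private lemma cosh_pow_le (m : ℕ) {u ρ : ℝ} (hu : 0 ≤ u) (huρ : u ≤ ρ) :
    Real.cosh u ^ m ≤ 1 + ((m : ℝ) / 2 * Real.exp ((m : ℝ) * ρ ^ 2 / 2)) * u ^ 2 := by
  have h1 : Real.cosh u ^ m ≤ Real.exp ((m : ℝ) * u ^ 2 / 2) := by
    calc Real.cosh u ^ m ≤ Real.exp (u ^ 2 / 2) ^ m :=
          pow_le_pow_left₀ (le_of_lt (Real.cosh_pos u)) (Real.cosh_le_exp_half_sq u) m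
      _ = Real.exp ((m : ℝ) * u ^ 2 / 2) := by
          rw [← Real.exp_nat_mul]; ring_nf
  have ht : (0:ℝ) ≤ (m : ℝ) * u ^ 2 / 2 := by positivity
  have h2 := exp_sub_one_le _ ht
  have h3 : Real.exp ((m : ℝ) * u ^ 2 / 2) ≤ Real.exp ((m : ℝ) * ρ ^ 2 / 2) := by
    apply Real.exp_le_exp.mpr
    have : u ^ 2 ≤ ρ ^ 2 := by nlinarith
    nlinarith [Nat.cast_nonneg (α := ℝ) m]
  nlinarith [Real.exp_pos ((m : ℝ) * u ^ 2 / 2), Nat.cast_nonneg (α := ℝ) m, sq_nonneg u]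

set_option maxHeartbeats 1000000 in
/-- M_d-property: for fixed ρ > 0, λ_d(ρ) → +∞ as d → 1⁻. -/
theorem md_property_tendsto_atTop (n : ℕ) (hn : 2 ≤ n) (ρ : ℝ) (hρ : 0 < ρ) :
    Tendsto (fun d : ℝ => ∫ u in (0:ℝ)..ρ,
        d / Real.sqrt (Real.cosh u ^ (2 * n - 2) - d ^ 2))
      (nhdsWithin 1 (Set.Ioo 0 1)) atTop := by
  set m : ℕ := 2 * n - 2 with hm
  set C : ℝ := (m : ℝ) / 2 * Real.exp ((m : ℝ) * ρ ^ 2 / 2) with hC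
  have hm2 : 2 ≤ m := by omega
  have hCpos : 0 < C := by
    have : (0:ℝ) < (m : ℝ) := by positivity
    positivity
  set c : ℝ := Real.sqrt C with hc
  have hcpos : 0 < c := Real.sqrt_pos.mpr hCpos
  have hcsq : c ^ 2 = C := Real.sq_sqrt hCpos.le
  -- the minorant function
  set h : ℝ → ℝ := fun d =>
    1 / 2 * c⁻¹ * (Real.log (c * ρ) - Real.log (Real.sqrt (1 - d ^ 2))) with hh
  -- h tends to atTop
  have hten : Tendsto h (nhdsWithin 1 (Set.Ioo 0 1)) atTop := by
    have t1 : Tendsto (fun d : ℝ => Real.sqrt (1 - d ^ 2))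
        (nhdsWithin 1 (Set.Ioo 0 1)) (nhdsWithin 0 (Set.Ioi 0)) := by
      rw [tendsto_nhdsWithin_iff]
      constructor
      · have hct : ContinuousAt (fun d : ℝ => Real.sqrt (1 - d ^ 2)) 1 := by
          fun_prop
        have h0 : Real.sqrt (1 - (1:ℝ) ^ 2) = 0 := by norm_num
        have := hct.tendsto.mono_left (nhdsWithin_le_nhds (s := Set.Ioo 0 1))
        rwa [h0] at this
      · filter_upwards [self_mem_nhdsWithin] with d hd
        have : (0:ℝ) < 1 - d ^ 2 := by nlinarith [hd.1, hd.2]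
        exact Real.sqrt_pos.mpr this
    have t2 : Tendsto (fun d : ℝ => Real.log (Real.sqrt (1 - d ^ 2)))
        (nhdsWithin 1 (Set.Ioo 0 1)) atBot :=
      Real.tendsto_log_nhdsGT_zero.comp t1
    have t3 : Tendsto (fun d : ℝ => Real.log (c * ρ) - Real.log (Real.sqrt (1 - d ^ 2)))
        (nhdsWithin 1 (Set.Ioo 0 1)) atTop :=
      tendsto_atTop_add_const_left _ _ (tendsto_neg_atBot_atTop.comp t2)
    have hpos : (0:ℝ) < 1 / 2 * c⁻¹ := by positivity
    simpa [hh, mul_comm] using t3.const_mul_atTop hpos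
  refine tendsto_atTop_mono' _ ?_ hten
  have hhalf : Set.Ioi (1/2 : ℝ) ∈ nhdsWithin 1 (Set.Ioo 0 1) :=
    nhdsWithin_le_nhds (Ioi_mem_nhds (by norm_num))
  filter_upwards [self_mem_nhdsWithin, hhalf] with d hd hd2
  have hd0 : 0 < d := hd.1
  have hd1 : d < 1 := hd.2
  have ha2 : (0:ℝ) < 1 - d ^ 2 := by nlinarith
  set a : ℝ := Real.sqrt (1 - d ^ 2) with hadef
  have hapos : 0 < a := Real.sqrt_pos.mpr ha2
  have hasq : a ^ 2 = 1 - d ^ 2 := Real.sq_sqrt ha2.le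
  -- pointwise bound on [0, ρ]
  have hpt : ∀ u ∈ Set.Icc (0:ℝ) ρ,
      d / (c * u + a) ≤ d / Real.sqrt (Real.cosh u ^ m - d ^ 2) := by
    intro u hu
    have hcosh1 : (1:ℝ) ≤ Real.cosh u ^ m := one_le_pow₀ (Real.one_le_cosh u)
    have hnum : 0 < Real.cosh u ^ m - d ^ 2 := by nlinarith
    have hub : Real.cosh u ^ m - d ^ 2 ≤ (c * u + a) ^ 2 := by
      have := cosh_pow_le m hu.1 hu.2
      have hexp : c ^ 2 * u ^ 2 = C * u ^ 2 := by rw [hcsq]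
      nlinarith [mul_nonneg (mul_nonneg hcpos.le hu.1) hapos.le]
    have hsle : Real.sqrt (Real.cosh u ^ m - d ^ 2) ≤ c * u + a := by
      have h1 := Real.sqrt_le_sqrt hub
      rwa [Real.sqrt_sq (by nlinarith [mul_nonneg hcpos.le hu.1] : (0:ℝ) ≤ c * u + a)] at h1
    exact div_le_div_of_nonneg_left hd0.le (Real.sqrt_pos.mpr hnum) hsle
  -- integrability
  have hfc : Continuous (fun u : ℝ => d / Real.sqrt (Real.cosh u ^ m - d ^ 2)) := by
    apply continuous_const.div
    · fun_prop
    · intro u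
      have hcosh1 : (1:ℝ) ≤ Real.cosh u ^ m := one_le_pow₀ (Real.one_le_cosh u)
      have : 0 < Real.cosh u ^ m - d ^ 2 := by nlinarith
      exact (Real.sqrt_pos.mpr this).ne'
  have hgc : ContinuousOn (fun u : ℝ => d / (c * u + a)) (Set.Icc 0 ρ) := by
    apply ContinuousOn.div continuousOn_const (by fun_prop)
    intro u hu
    have : 0 < c * u + a := by nlinarith [mul_nonneg hcpos.le hu.1]
    exact this.ne'
  have huIcc : Set.uIcc (0:ℝ) ρ = Set.Icc 0 ρ := Set.uIcc_of_le hρ.le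
  have hfint : IntervalIntegrable (fun u : ℝ => d / Real.sqrt (Real.cosh u ^ m - d ^ 2))
      volume 0 ρ := hfc.intervalIntegrable 0 ρ
  have hgint : IntervalIntegrable (fun u : ℝ => d / (c * u + a)) volume 0 ρ :=
    (hgc.mono (by rw [huIcc])).intervalIntegrable
  -- comparison of integrals
  have hmono : (∫ u in (0:ℝ)..ρ, d / (c * u + a))
      ≤ ∫ u in (0:ℝ)..ρ, d / Real.sqrt (Real.cosh u ^ m - d ^ 2) :=
    intervalIntegral.integral_mono_on hρ.le hgint hfint hpt
  -- compute the lower integral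
  have hcalc : (∫ u in (0:ℝ)..ρ, d / (c * u + a))
      = d * (c⁻¹ * Real.log ((c * ρ + a) / a)) := by
    have e1 : (∫ u in (0:ℝ)..ρ, d / (c * u + a))
        = d * ∫ u in (0:ℝ)..ρ, (c * u + a)⁻¹ := by
      simp_rw [div_eq_mul_inv]
      exact intervalIntegral.integral_const_mul d _
    have e2 : (∫ u in (0:ℝ)..ρ, (fun x : ℝ => x⁻¹) (c * u + a))
        = c⁻¹ • ∫ x in (c * 0 + a)..(c * ρ + a), x⁻¹ :=
      intervalIntegral.integral_comp_mul_add (fun x : ℝ => x⁻¹) hcpos.ne' a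
    rw [e1]
    simp only [mul_zero, zero_add] at e2
    rw [e2, integral_inv_of_pos hapos (by positivity)]
    simp [smul_eq_mul]
  -- conclude h d ≤ integral
  have hX : 0 ≤ Real.log ((c * ρ + a) / a) := by
    apply Real.log_nonneg
    rw [le_div_iff₀ hapos]
    nlinarith [mul_pos hcpos hρ]
  have hlog : Real.log (c * ρ) ≤ Real.log (c * ρ + a) :=
    Real.log_le_log (by positivity) (by nlinarith)
  have hXeq : Real.log ((c * ρ + a) / a) = Real.log (c * ρ + a) - Real.log a :=
    Real.log_div (by positivity) hapos.ne'
  have hinv : 0 < c⁻¹ := by positivity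
  calc h d = 1 / 2 * c⁻¹ * (Real.log (c * ρ) - Real.log a) := rfl
    _ ≤ 1 / 2 * c⁻¹ * (Real.log (c * ρ + a) - Real.log a) := by
        apply mul_le_mul_of_nonneg_left _ (by positivity)
        linarith
    _ ≤ d * (c⁻¹ * Real.log ((c * ρ + a) / a)) := by
        rw [hXeq]
        have hd2' : (1/2:ℝ) < d := hd2
        have hX' : (0:ℝ) ≤ Real.log (c * ρ + a) - Real.log a := hXeq ▸ hX
        nlinarith [mul_nonneg hinv.le hX', mul_nonneg (mul_nonneg (by linarith : (0:ℝ) ≤ d - 1/2) hinv.le) hX']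
    _ = ∫ u in (0:ℝ)..ρ, d / (c * u + a) := hcalc.symm
    _ ≤ _ := hmono
end

section
/- The function R(a) = sinh(a) · ∫₁^∞ (sinh²(a)·s² + 1)^(−1/2) · (s^(2n−2) − 1)^(−1/2) ds satisfies R(a) < π/(2n−2) for every a > 0. -/
open Real MeasureTheory

lemma cat_aux_deriv (m : ℕ) (hm : 1 ≤ m) {s : ℝ} (hs : 1 < s) :
    HasDerivAt (fun t : ℝ => -(1 / (m : ℝ)) * Real.arcsin ((t ^ m)⁻¹))
      (1 / (s * Real.sqrt (s ^ (2 * m) - 1))) s := by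
  have hs0 : 0 < s := lt_trans one_pos hs
  have hsm : (1 : ℝ) < s ^ m := one_lt_pow₀ hs (by omega)
  have hsm0 : s ^ m ≠ 0 := by positivity
  have hinv0 : (0 : ℝ) < (s ^ m)⁻¹ := by positivity
  have hinv1 : (s ^ m)⁻¹ < 1 := by
    rw [inv_lt_one_iff₀]; right; exact hsm
  have hu : HasDerivAt (fun t : ℝ => (t ^ m)⁻¹)
      (-((m : ℝ) * s ^ (m - 1)) / (s ^ m) ^ 2) s :=
    (hasDerivAt_pow m s).inv hsm0
  have harc : HasDerivAt Real.arcsin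
      (1 / Real.sqrt (1 - ((s ^ m)⁻¹) ^ 2)) ((s ^ m)⁻¹) :=
    Real.hasDerivAt_arcsin (by linarith) (ne_of_lt hinv1)
  have hcomp := (harc.comp s hu).const_mul (-(1 / (m : ℝ)))
  refine hcomp.congr_deriv (Eq.symm ?_)
  have hpm : ((s ^ m : ℝ)) ^ 2 = s ^ (2 * m) := by
    rw [← pow_mul, mul_comm]
  have h2m : (0:ℝ) < s ^ (2 * m) - 1 := by
    have : (1:ℝ) < s ^ (2*m) := one_lt_pow₀ hs (by omega)
    linarith
  have hsq : Real.sqrt (1 - ((s ^ m)⁻¹) ^ 2)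
      = Real.sqrt (s ^ (2 * m) - 1) / s ^ m := by
    have h1 : (1 : ℝ) - ((s ^ m)⁻¹) ^ 2 = (s ^ (2 * m) - 1) / (s ^ m) ^ 2 := by
      field_simp
      rw [hpm]
    rw [h1, Real.sqrt_div h2m.le, Real.sqrt_sq (by positivity)]
  rw [hsq]
  have hB : (0:ℝ) < Real.sqrt (s ^ (2*m) - 1) := Real.sqrt_pos.2 h2m
  have hm0 : (m : ℝ) ≠ 0 := by positivity
  have hpow : s ^ m * s ^ (m - 1) * s = s ^ (2 * m) := by
    rw [← pow_add, ← pow_succ]; congr 1; omega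
  field_simp
  linear_combination (-1:ℝ) * pow_sub_one_mul (by omega : m ≠ 0) s

lemma cat_aux_integral (m : ℕ) (hm : 1 ≤ m) :
    IntegrableOn (fun s : ℝ => 1 / (s * Real.sqrt (s ^ (2 * m) - 1))) (Set.Ioi 1) ∧
    ∫ s in Set.Ioi (1:ℝ), 1 / (s * Real.sqrt (s ^ (2 * m) - 1)) = π / (2 * m) := by
  set G : ℝ → ℝ := fun t => -(1 / (m : ℝ)) * Real.arcsin ((t ^ m)⁻¹) with hG
  have hderiv : ∀ s ∈ Set.Ioi (1:ℝ),
      HasDerivAt G (1 / (s * Real.sqrt (s ^ (2 * m) - 1))) s :=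
    fun s hs => cat_aux_deriv m hm hs
  have hpos : ∀ s ∈ Set.Ioi (1:ℝ), 0 ≤ 1 / (s * Real.sqrt (s ^ (2 * m) - 1)) := by
    intro s hs
    have : (1:ℝ) < s := hs
    positivity
  have hcont : ContinuousWithinAt G (Set.Ici 1) 1 := by
    apply ContinuousAt.continuousWithinAt
    have : ContinuousAt (fun t : ℝ => (t ^ m)⁻¹) 1 := by
      apply ContinuousAt.inv₀ (by fun_prop)
      simp
    exact (continuousAt_const.mul (Real.continuous_arcsin.continuousAt.comp this))
  have htend : Filter.Tendsto G Filter.atTop (nhds 0) := by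
    have h1 : Filter.Tendsto (fun t : ℝ => (t ^ m)⁻¹) Filter.atTop (nhds 0) :=
      (Filter.tendsto_pow_atTop (by omega : m ≠ 0)).inv_tendsto_atTop
    have h2 := (Real.continuous_arcsin.tendsto 0).comp h1
    rw [Real.arcsin_zero] at h2
    have h3 := h2.const_mul (-(1 / (m : ℝ)))
    simp only [mul_zero] at h3
    exact h3
  have hint := integrableOn_Ioi_deriv_of_nonneg hcont hderiv hpos htend
  refine ⟨hint, ?_⟩
  have hval := integral_Ioi_of_hasDerivAt_of_nonneg hcont hderiv hpos htend
  rw [hval]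
  show (0:ℝ) - (-(1 / (m : ℝ)) * Real.arcsin ((1 ^ m)⁻¹)) = π / (2 * m)
  have hm0 : (m : ℝ) ≠ 0 := by positivity
  rw [one_pow, inv_one, Real.arcsin_one, eq_div_iff (by positivity : (2*(m:ℝ)) ≠ 0)]
  field_simp
  ring

/-- R(a) < π/(2n−2) for every a > 0. -/
theorem catenoid_height_lt (n : ℕ) (hn : 2 ≤ n) (a : ℝ) (ha : 0 < a) :
    Real.sinh a * (∫ s in Set.Ioi (1:ℝ),
        1 / (Real.sqrt (Real.sinh a ^ 2 * s ^ 2 + 1) * Real.sqrt (s ^ (2 * n - 2) - 1)))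
      < Real.pi / (2 * (n : ℝ) - 2) := by
  set m : ℕ := n - 1 with hmdef
  have hm : 1 ≤ m := by omega
  have hk : 2 * n - 2 = 2 * m := by omega
  have hcast : 2 * (n : ℝ) - 2 = (2 * m : ℕ) := by
    push_cast [hmdef, Nat.cast_sub (by omega : 1 ≤ n)]
    ring
  set c : ℝ := Real.sinh a with hc
  have hc0 : 0 < c := Real.sinh_pos_iff.mpr ha
  set f : ℝ → ℝ := fun s => 1 / (s * Real.sqrt (s ^ (2 * m) - 1)) with hf
  set g : ℝ → ℝ := fun s =>
    c * (1 / (Real.sqrt (c ^ 2 * s ^ 2 + 1) * Real.sqrt (s ^ (2 * m) - 1))) with hg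
  obtain ⟨hfint, hfval⟩ := cat_aux_integral m hm
  -- basic pointwise facts
  have key : ∀ s ∈ Set.Ioi (1:ℝ), 0 ≤ g s ∧ g s < f s := by
    intro s hs
    have hs1 : (1:ℝ) < s := hs
    have hs0 : (0:ℝ) < s := lt_trans one_pos hs1
    have h2m : (0:ℝ) < s ^ (2 * m) - 1 := by
      have : (1:ℝ) < s ^ (2*m) := one_lt_pow₀ hs1 (by omega)
      linarith
    have hB : (0:ℝ) < Real.sqrt (s ^ (2*m) - 1) := Real.sqrt_pos.2 h2m
    have hA : c * s < Real.sqrt (c ^ 2 * s ^ 2 + 1) := by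
      have h1 : c * s = Real.sqrt ((c * s) ^ 2) := by
        rw [Real.sqrt_sq (by positivity)]
      rw [h1]
      apply Real.sqrt_lt_sqrt (by positivity)
      nlinarith
    have hA0 : (0:ℝ) < Real.sqrt (c ^ 2 * s ^ 2 + 1) := lt_trans (by positivity) hA
    constructor
    · positivity
    · show c * (1 / (Real.sqrt (c ^ 2 * s ^ 2 + 1) * Real.sqrt (s ^ (2 * m) - 1)))
        < 1 / (s * Real.sqrt (s ^ (2 * m) - 1))
      rw [mul_one_div, div_lt_div_iff₀ (by positivity) (by positivity)]
      have : c * s < Real.sqrt (c ^ 2 * s ^ 2 + 1) := hA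
      nlinarith
  -- g measurable
  have hgmeas : AEStronglyMeasurable g (volume.restrict (Set.Ioi (1:ℝ))) := by
    apply Measurable.aestronglyMeasurable
    fun_prop
  -- g integrable
  have hgint : IntegrableOn g (Set.Ioi (1:ℝ)) := by
    apply Integrable.mono' hfint hgmeas
    rw [ae_restrict_iff' measurableSet_Ioi]
    filter_upwards with s hs
    rw [Real.norm_eq_abs, abs_of_nonneg (key s hs).1]
    exact (key s hs).2.le
  -- strict inequality of integrals
  have hlt : ∫ s in Set.Ioi (1:ℝ), g s < ∫ s in Set.Ioi (1:ℝ), f s := by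
    have hsub : 0 < ∫ s in Set.Ioi (1:ℝ), (f s - g s) := by
      rw [setIntegral_pos_iff_support_of_nonneg_ae]
      · have hsup : Set.Ioi (1:ℝ) ⊆ Function.support (fun s => f s - g s) := by
          intro s hs
          have := (key s hs).2
          simp only [Function.mem_support]
          intro h
          linarith [sub_eq_zero.mp h]
        calc (0:ENNReal) < volume (Set.Ioi (1:ℝ)) := by simp
          _ = volume (Function.support (fun s => f s - g s) ∩ Set.Ioi 1) := by
              rw [Set.inter_eq_right.2 hsup]
      · rw [Filter.EventuallyLE, ae_restrict_iff' measurableSet_Ioi]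
        filter_upwards with s hs
        have := (key s hs).2
        simp only [Pi.zero_apply]
        linarith
      · exact hfint.sub hgint
    have := integral_sub hfint hgint
    rw [this] at hsub
    linarith
  -- assemble
  have hmove : Real.sinh a * (∫ s in Set.Ioi (1:ℝ),
      1 / (Real.sqrt (Real.sinh a ^ 2 * s ^ 2 + 1) * Real.sqrt (s ^ (2 * n - 2) - 1)))
      = ∫ s in Set.Ioi (1:ℝ), g s := by
    rw [hk, ← MeasureTheory.integral_const_mul]
  rw [hmove, hcast]
  calc ∫ s in Set.Ioi (1:ℝ), g s < ∫ s in Set.Ioi (1:ℝ), f s := hlt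
    _ = π / (2 * m) := hfval
    _ = π / ((2 * m : ℕ) : ℝ) := by push_cast; ring
end

section
/- The function R(a) = sinh(a) · ∫₁^∞ (sinh²(a)·s² + 1)^(−1/2) · (s^(2n−2) − 1)^(−1/2) ds is strictly increasing in a on (0, ∞). -/
open Real MeasureTheory

section Aux

variable (n : ℕ)

private lemma aux_cont (hn : 2 ≤ n) {c : ℝ} (hc : 0 < c) :
    ContinuousOn (fun s : ℝ => c / (Real.sqrt (c ^ 2 * s ^ 2 + 1) *
      Real.sqrt (s ^ (2 * n - 2) - 1))) (Set.Ioi 1) := by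
  apply ContinuousOn.div continuousOn_const
  · exact ((Real.continuous_sqrt.comp (by continuity)).mul
      (Real.continuous_sqrt.comp (by continuity))).continuousOn
  · intro s hs
    have hs1 : (1:ℝ) < s := hs
    have h1 : 0 < Real.sqrt (c ^ 2 * s ^ 2 + 1) := Real.sqrt_pos.mpr (by positivity)
    have h2 : 0 < Real.sqrt (s ^ (2 * n - 2) - 1) := by
      apply Real.sqrt_pos.mpr
      have : (1:ℝ) < s ^ (2 * n - 2) := one_lt_pow₀ hs1 (by omega)
      linarith
    positivity

private lemma aux_sqrt_lb {c s : ℝ} (hc : 0 ≤ c) (hs : 0 ≤ s) :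
    c * s ≤ Real.sqrt (c ^ 2 * s ^ 2 + 1) := by
  rw [Real.le_sqrt (by positivity) (by positivity)]
  nlinarith

private lemma aux_integrable (hn : 2 ≤ n) {c : ℝ} (hc : 0 < c) :
    IntegrableOn (fun s : ℝ => c / (Real.sqrt (c ^ 2 * s ^ 2 + 1) *
      Real.sqrt (s ^ (2 * n - 2) - 1))) (Set.Ioi 1) := by
  have hunion : Set.Ioc (1:ℝ) 2 ∪ Set.Ioi 2 = Set.Ioi 1 := Set.Ioc_union_Ioi_eq_Ioi (by norm_num)
  rw [← hunion]
  apply IntegrableOn.union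
  · -- on Ioc 1 2 : bound by (s-1)^(-1/2)
    have hg : IntegrableOn (fun s : ℝ => (s - 1) ^ (-(1/2) : ℝ)) (Set.Ioc 1 2) := by
      have := (intervalIntegral.intervalIntegrable_rpow' (a := 0) (b := 1)
        (r := -(1/2)) (by norm_num)).comp_sub_right 1
      norm_num at this
      exact this.1
    apply hg.integrable.mono'
    · exact ((aux_cont n hn hc).mono Set.Ioc_subset_Ioi_self).aestronglyMeasurable
        measurableSet_Ioc
    · filter_upwards [ae_restrict_mem measurableSet_Ioc] with s hs
      obtain ⟨hs1, hs2⟩ := hs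
      have hs0 : (0:ℝ) < s := by linarith
      have hpow : s - 1 ≤ s ^ (2 * n - 2) - 1 := by
        have : s ^ 1 ≤ s ^ (2 * n - 2) := pow_le_pow_right₀ (by linarith) (by omega)
        simpa using this
      have hA : c ≤ Real.sqrt (c ^ 2 * s ^ 2 + 1) := by
        rw [Real.le_sqrt (le_of_lt hc) (by positivity)]
        have hss : 1 ≤ s ^ 2 := by nlinarith
        nlinarith [mul_le_mul_of_nonneg_left hss (sq_nonneg c)]
      have hB : Real.sqrt (s - 1) ≤ Real.sqrt (s ^ (2 * n - 2) - 1) :=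
        Real.sqrt_le_sqrt hpow
      have hBpos : 0 < Real.sqrt (s - 1) := Real.sqrt_pos.mpr (by linarith)
      have hApos : 0 < Real.sqrt (c ^ 2 * s ^ 2 + 1) := lt_of_lt_of_le hc hA
      have hrw : (s - 1) ^ (-(1/2) : ℝ) = (Real.sqrt (s - 1))⁻¹ := by
        rw [Real.sqrt_eq_rpow]
        exact Real.rpow_neg (by linarith) _
      rw [Real.norm_eq_abs, abs_of_nonneg (by positivity), hrw]
      calc c / (Real.sqrt (c ^ 2 * s ^ 2 + 1) * Real.sqrt (s ^ (2 * n - 2) - 1))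
          ≤ c / (c * Real.sqrt (s - 1)) := by
            gcongr
        _ = (Real.sqrt (s - 1))⁻¹ := by
            field_simp
  · -- on Ioi 2 : bound by √2 * s^(-n)
    have hg : IntegrableOn (fun s : ℝ => Real.sqrt 2 * s ^ (-(n:ℝ))) (Set.Ioi 2) := by
      apply Integrable.const_mul
      exact integrableOn_Ioi_rpow_of_lt (by
        have : (2:ℝ) ≤ (n:ℝ) := by exact_mod_cast hn
        linarith) (by norm_num)
    apply hg.integrable.mono'
    · exact ((aux_cont n hn hc).mono (fun x (hx : x ∈ Set.Ioi (2:ℝ)) => (lt_trans one_lt_two hx : (1:ℝ) < x))).aestronglyMeasurable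
        measurableSet_Ioi
    · filter_upwards [ae_restrict_mem measurableSet_Ioi] with s hs
      have hs2 : (2:ℝ) < s := hs
      have hs0 : (0:ℝ) < s := by linarith
      have hA : c * s ≤ Real.sqrt (c ^ 2 * s ^ 2 + 1) :=
        aux_sqrt_lb (le_of_lt hc) (le_of_lt hs0)
      -- s^(2n-2) = (s^(n-1))^2
      have hexp : 2 * n - 2 = (n - 1) * 2 := by omega
      have hsn : (1:ℝ) ≤ s ^ (n - 1) := one_le_pow₀ (by linarith)
      have hB : s ^ (n - 1) / Real.sqrt 2 ≤ Real.sqrt (s ^ (2 * n - 2) - 1) := by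
        rw [Real.le_sqrt (by positivity) (by nlinarith [one_lt_pow₀ (show (1:ℝ) < s by linarith) (show 2*n-2 ≠ 0 by omega)])]
        rw [div_pow, Real.sq_sqrt (by norm_num), hexp, pow_mul]
        have h2a : (2:ℝ) ≤ 2 ^ (n-1) := by
          calc (2:ℝ) = 2 ^ 1 := (pow_one 2).symm
            _ ≤ 2 ^ (n-1) := pow_le_pow_right₀ one_le_two (by omega)
        have h2b : (2:ℝ) ^ (n-1) ≤ s ^ (n-1) :=
          pow_le_pow_left₀ (by norm_num) (le_of_lt hs2) _
        nlinarith [sq_nonneg (s ^ (n-1))]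
      have hApos : 0 < c * s := by positivity
      have hBpos : 0 < s ^ (n - 1) / Real.sqrt 2 := by positivity
      have hrpow : s ^ (-(n:ℝ)) = (s ^ n)⁻¹ := by
        rw [Real.rpow_neg (le_of_lt hs0), Real.rpow_natCast]
      rw [Real.norm_eq_abs, abs_of_nonneg (by positivity), hrpow]
      calc c / (Real.sqrt (c ^ 2 * s ^ 2 + 1) * Real.sqrt (s ^ (2 * n - 2) - 1))
          ≤ c / ((c * s) * (s ^ (n - 1) / Real.sqrt 2)) := by
            gcongr
        _ = Real.sqrt 2 * (s ^ n)⁻¹ := by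
            have hsqrt2 : Real.sqrt 2 ≠ 0 := by positivity
            have hsn' : s * s ^ (n - 1) = s ^ n := by
              rw [← pow_succ']
              congr 1
              omega
            rw [← hsn']
            field_simp


private lemma aux_strict (hn : 2 ≤ n) {p q s : ℝ} (hp : 0 < p) (hpq : p < q) (hs : 1 < s) :
    p / (Real.sqrt (p ^ 2 * s ^ 2 + 1) * Real.sqrt (s ^ (2 * n - 2) - 1)) <
    q / (Real.sqrt (q ^ 2 * s ^ 2 + 1) * Real.sqrt (s ^ (2 * n - 2) - 1)) := by
  have hq : 0 < q := lt_trans hp hpq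
  have hB : 0 < Real.sqrt (s ^ (2 * n - 2) - 1) := by
    apply Real.sqrt_pos.mpr
    have : (1:ℝ) < s ^ (2 * n - 2) := one_lt_pow₀ hs (by omega)
    linarith
  have hAp : 0 < Real.sqrt (p ^ 2 * s ^ 2 + 1) := Real.sqrt_pos.mpr (by positivity)
  have hAq : 0 < Real.sqrt (q ^ 2 * s ^ 2 + 1) := Real.sqrt_pos.mpr (by positivity)
  rw [← div_div, ← div_div]
  apply div_lt_div_of_pos_right _ hB
  rw [div_lt_div_iff₀ hAp hAq]
  have h1 : p * Real.sqrt (q ^ 2 * s ^ 2 + 1) = Real.sqrt (p ^ 2 * (q ^ 2 * s ^ 2 + 1)) := by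
    rw [Real.sqrt_mul (by positivity), Real.sqrt_sq (le_of_lt hp)]
  have h2 : q * Real.sqrt (p ^ 2 * s ^ 2 + 1) = Real.sqrt (q ^ 2 * (p ^ 2 * s ^ 2 + 1)) := by
    rw [Real.sqrt_mul (by positivity), Real.sqrt_sq (le_of_lt hq)]
  rw [h1, h2]
  apply Real.sqrt_lt_sqrt (by positivity)
  nlinarith

end Aux

/-- R is strictly increasing on (0, ∞). -/
theorem catenoid_height_strictMonoOn (n : ℕ) (hn : 2 ≤ n) :
    StrictMonoOn (fun a : ℝ => Real.sinh a * (∫ s in Set.Ioi (1:ℝ),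
        1 / (Real.sqrt (Real.sinh a ^ 2 * s ^ 2 + 1) * Real.sqrt (s ^ (2 * n - 2) - 1))))
      (Set.Ioi 0) := by
  intro a ha b hb hab
  have hp : 0 < Real.sinh a := Real.sinh_pos_iff.mpr ha
  have hpq : Real.sinh a < Real.sinh b := Real.sinh_lt_sinh.mpr hab
  have hq : 0 < Real.sinh b := lt_trans hp hpq
  set p := Real.sinh a
  set q := Real.sinh b
  have hrw : ∀ c : ℝ, c * (∫ s in Set.Ioi (1:ℝ),
      1 / (Real.sqrt (c ^ 2 * s ^ 2 + 1) * Real.sqrt (s ^ (2 * n - 2) - 1))) =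
      ∫ s in Set.Ioi (1:ℝ),
        c / (Real.sqrt (c ^ 2 * s ^ 2 + 1) * Real.sqrt (s ^ (2 * n - 2) - 1)) := by
    intro c
    rw [← MeasureTheory.integral_const_mul]
    congr 1
    ext s
    rw [mul_one_div]
  simp only
  rw [hrw p, hrw q]
  have hintp := aux_integrable n hn hp
  have hintq := aux_integrable n hn hq
  have hdiff : IntegrableOn (fun s : ℝ =>
      q / (Real.sqrt (q ^ 2 * s ^ 2 + 1) * Real.sqrt (s ^ (2 * n - 2) - 1)) -
      p / (Real.sqrt (p ^ 2 * s ^ 2 + 1) * Real.sqrt (s ^ (2 * n - 2) - 1)))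
      (Set.Ioi 1) := hintq.sub hintp
  have hpos : 0 < ∫ s in Set.Ioi (1:ℝ),
      (q / (Real.sqrt (q ^ 2 * s ^ 2 + 1) * Real.sqrt (s ^ (2 * n - 2) - 1)) -
       p / (Real.sqrt (p ^ 2 * s ^ 2 + 1) * Real.sqrt (s ^ (2 * n - 2) - 1))) := by
    rw [setIntegral_pos_iff_support_of_nonneg_ae ?_ hdiff]
    · have hsub : Set.Ioi (1:ℝ) ⊆ Function.support (fun s : ℝ =>
          q / (Real.sqrt (q ^ 2 * s ^ 2 + 1) * Real.sqrt (s ^ (2 * n - 2) - 1)) -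
          p / (Real.sqrt (p ^ 2 * s ^ 2 + 1) * Real.sqrt (s ^ (2 * n - 2) - 1))) := by
        intro s hs
        have := aux_strict n hn hp hpq (hs : (1:ℝ) < s)
        simp only [Function.mem_support]
        intro h
        linarith [sub_eq_zero.mp h ▸ this]
      have : Function.support (fun s : ℝ =>
          q / (Real.sqrt (q ^ 2 * s ^ 2 + 1) * Real.sqrt (s ^ (2 * n - 2) - 1)) -
          p / (Real.sqrt (p ^ 2 * s ^ 2 + 1) * Real.sqrt (s ^ (2 * n - 2) - 1))) ∩
          Set.Ioi 1 = Set.Ioi 1 := Set.inter_eq_right.mpr hsub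
      rw [this, Real.volume_Ioi]
      exact ENNReal.zero_lt_top
    · filter_upwards [ae_restrict_mem measurableSet_Ioi] with s hs
      have := aux_strict n hn hp hpq (hs : (1:ℝ) < s)
      simp only [Pi.zero_apply]
      linarith
  have hsub := integral_sub (hintq.integrable) (hintp.integrable)
  rw [hsub] at hpos
  linarith
end

section
/- R(a) → 0 as a → 0⁺, where R(a) = sinh(a) · ∫₁^∞ (sinh²(a)·s² + 1)^(−1/2) · (s^(2n−2) − 1)^(−1/2) ds. -/
open Real MeasureTheory Filter

/-- The dominating function. -/
noncomputable def gbound (n : ℕ) (s : ℝ) : ℝ :=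
  min (Real.sinh 1) (1 / s) / Real.sqrt (s ^ (2 * n - 2) - 1)

lemma gbound_integrable (n : ℕ) (hn : 2 ≤ n) :
    IntegrableOn (gbound n) (Set.Ioi (1:ℝ)) := by
  have hmeas : AEStronglyMeasurable (gbound n) (volume.restrict (Set.Ioi (1:ℝ))) := by
    apply Measurable.aestronglyMeasurable
    unfold gbound
    fun_prop
  have hpow : (1:ℕ) ≤ 2 * n - 2 := by omega
  have hIoc : IntegrableOn (gbound n) (Set.Ioc (1:ℝ) 2) := by
    have hbase : IntervalIntegrable (fun x : ℝ => x ^ (-(1/2) : ℝ)) volume 0 1 :=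
      intervalIntegral.intervalIntegrable_rpow' (by norm_num)
    have hshift : IntervalIntegrable (fun x : ℝ => (x - 1) ^ (-(1/2) : ℝ)) volume 1 2 := by
      have h := hbase.comp_sub_right 1
      norm_num at h
      exact h
    have hint : IntegrableOn (fun x : ℝ => Real.sinh 1 * (x - 1) ^ (-(1/2) : ℝ))
        (Set.Ioc (1:ℝ) 2) := by
      have := (intervalIntegrable_iff_integrableOn_Ioc_of_le (by norm_num : (1:ℝ) ≤ 2)).mp hshift
      exact this.const_mul _
    refine hint.mono' (hmeas.mono_measure (Measure.restrict_mono Set.Ioc_subset_Ioi_self le_rfl)) ?_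
    rw [ae_restrict_iff' measurableSet_Ioc]
    refine ae_of_all _ fun s hs => ?_
    obtain ⟨hs1, hs2⟩ := hs
    have hs1' : (1:ℝ) ≤ s := hs1.le
    have hB : Real.sqrt (s - 1) ≤ Real.sqrt (s ^ (2 * n - 2) - 1) := by
      apply Real.sqrt_le_sqrt
      have : s ≤ s ^ (2 * n - 2) := le_self_pow₀ hs1' (by omega)
      linarith
    have hBpos : (0:ℝ) ≤ Real.sqrt (s ^ (2 * n - 2) - 1) := Real.sqrt_nonneg _
    have hgnonneg : 0 ≤ gbound n s := by
      unfold gbound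
      exact div_nonneg (le_min (Real.sinh_nonneg_iff.mpr zero_le_one)
        (div_nonneg zero_le_one (by linarith))) hBpos
    rw [Real.norm_of_nonneg hgnonneg]
    unfold gbound
    rw [Real.rpow_neg (by linarith), ← Real.sqrt_eq_rpow]
    calc min (Real.sinh 1) (1 / s) / Real.sqrt (s ^ (2 * n - 2) - 1)
        ≤ Real.sinh 1 / Real.sqrt (s - 1) := by
          exact div_le_div₀ (Real.sinh_nonneg_iff.mpr zero_le_one) (min_le_left _ _)
            (Real.sqrt_pos.mpr (by linarith)) hB
      _ = Real.sinh 1 * (Real.sqrt (s - 1))⁻¹ := by ring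
  have hIoi : IntegrableOn (gbound n) (Set.Ioi (2:ℝ)) := by
    have hint : IntegrableOn (fun s : ℝ => Real.sqrt 2 * s ^ (-2 : ℝ)) (Set.Ioi (2:ℝ)) :=
      (integrableOn_Ioi_rpow_of_lt (by norm_num) (by norm_num)).const_mul _
    refine hint.mono' (hmeas.mono_measure (Measure.restrict_mono (Set.Ioi_subset_Ioi (by norm_num)) le_rfl)) ?_
    rw [ae_restrict_iff' measurableSet_Ioi]
    refine ae_of_all _ fun s hs => ?_
    have hs2 : (2:ℝ) < s := hs
    have hs0 : (0:ℝ) < s := by linarith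
    have hsq : s ^ 2 / 2 ≤ s ^ (2 * n - 2) - 1 := by
      have h1 : s ^ 2 ≤ s ^ (2 * n - 2) := pow_le_pow_right₀ (by linarith) (by omega)
      nlinarith
    have hB : s / Real.sqrt 2 ≤ Real.sqrt (s ^ (2 * n - 2) - 1) := by
      have h1 : Real.sqrt (s ^ 2 / 2) ≤ Real.sqrt (s ^ (2 * n - 2) - 1) := Real.sqrt_le_sqrt hsq
      have h2 : s / Real.sqrt 2 = Real.sqrt (s ^ 2 / 2) := by
        rw [Real.sqrt_div (by positivity) 2, Real.sqrt_sq hs0.le]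
      rw [h2]; exact h1
    have hBpos : (0:ℝ) < Real.sqrt (s ^ (2 * n - 2) - 1) := by
      apply lt_of_lt_of_le _ hB
      positivity
    have hgnonneg : 0 ≤ gbound n s := by
      unfold gbound
      apply div_nonneg (le_min (Real.sinh_nonneg_iff.mpr zero_le_one) (by positivity)) hBpos.le
    rw [Real.norm_of_nonneg hgnonneg]
    unfold gbound
    calc min (Real.sinh 1) (1 / s) / Real.sqrt (s ^ (2 * n - 2) - 1)
        ≤ (1 / s) / (s / Real.sqrt 2) := by
          apply div_le_div₀ (by positivity) (min_le_right _ _) (by positivity) hB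
      _ = Real.sqrt 2 * s ^ (-2 : ℝ) := by
          rw [Real.rpow_neg hs0.le, Real.rpow_two]
          field_simp
  have : Set.Ioi (1:ℝ) = Set.Ioc 1 2 ∪ Set.Ioi 2 := (Set.Ioc_union_Ioi_eq_Ioi (by norm_num)).symm
  rw [this]
  exact hIoc.union hIoi

/-- R(a) → 0 as a → 0⁺. -/
theorem catenoid_height_tendsto_zero (n : ℕ) (hn : 2 ≤ n) :
    Tendsto (fun a : ℝ => Real.sinh a * (∫ s in Set.Ioi (1:ℝ),
        1 / (Real.sqrt (Real.sinh a ^ 2 * s ^ 2 + 1) * Real.sqrt (s ^ (2 * n - 2) - 1))))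
      (nhdsWithin 0 (Set.Ioi 0)) (nhds 0) := by
  simp_rw [← MeasureTheory.integral_const_mul]
  have key : Tendsto (fun a : ℝ => ∫ s in Set.Ioi (1:ℝ), Real.sinh a *
        (1 / (Real.sqrt (Real.sinh a ^ 2 * s ^ 2 + 1) * Real.sqrt (s ^ (2 * n - 2) - 1))))
      (nhdsWithin 0 (Set.Ioi 0)) (nhds (∫ _ in Set.Ioi (1:ℝ), (0:ℝ))) := by
    apply MeasureTheory.tendsto_integral_filter_of_dominated_convergence (gbound n)
    · refine Eventually.of_forall fun a => ?_
      apply Measurable.aestronglyMeasurable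
      fun_prop
    · have hmem : Set.Ioc (0:ℝ) 1 ∈ nhdsWithin 0 (Set.Ioi 0) :=
        Ioc_mem_nhdsGT_of_mem (by norm_num)
      filter_upwards [hmem] with a ha
      rw [ae_restrict_iff' measurableSet_Ioi]
      refine ae_of_all _ fun s hs => ?_
      have hs1 : (1:ℝ) < s := hs
      have ha0 : 0 < a := ha.1
      have ha1 : a ≤ 1 := ha.2
      have hsa : 0 < Real.sinh a := Real.sinh_pos_iff.mpr ha0
      set A := Real.sqrt (Real.sinh a ^ 2 * s ^ 2 + 1) with hA
      set B := Real.sqrt (s ^ (2 * n - 2) - 1) with hB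
      have hA1 : (1:ℝ) ≤ A := by
        have h := Real.sqrt_le_sqrt (show (1:ℝ) ≤ Real.sinh a ^ 2 * s ^ 2 + 1 by nlinarith)
        simpa [hA] using h
      have hA0 : (0:ℝ) < A := lt_of_lt_of_le one_pos hA1
      have hAs : Real.sinh a * s ≤ A := by
        rw [hA]
        have : Real.sinh a * s = Real.sqrt ((Real.sinh a * s) ^ 2) := by
          rw [Real.sqrt_sq (by positivity)]
        rw [this]
        apply Real.sqrt_le_sqrt
        ring_nf
        nlinarith
      have hBnn : (0:ℝ) ≤ B := Real.sqrt_nonneg _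
      have hnonneg : 0 ≤ Real.sinh a * (1 / (A * B)) := by positivity
      rw [Real.norm_of_nonneg hnonneg]
      unfold gbound
      rw [← hB]
      have key : Real.sinh a * (1 / (A * B)) = (Real.sinh a / A) / B := by ring
      rw [key]
      have hBpos : (0:ℝ) < B := by
        rw [hB]
        apply Real.sqrt_pos.mpr
        have h1 : s < s ^ (2 * n - 2) := by
          calc s < s ^ 2 := by nlinarith
            _ ≤ s ^ (2 * n - 2) := pow_le_pow_right₀ hs1.le (by omega)
        linarith
      apply (div_le_div_iff_of_pos_right hBpos).mpr
      apply le_min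
      · calc Real.sinh a / A ≤ Real.sinh a := div_le_self hsa.le hA1
          _ ≤ Real.sinh 1 := Real.sinh_le_sinh.mpr ha1
      · have hs0 : (0:ℝ) < s := by linarith
        calc Real.sinh a / A ≤ Real.sinh a / (Real.sinh a * s) :=
              div_le_div_of_nonneg_left hsa.le (by positivity) hAs
          _ = 1 / s := by field_simp
    · exact gbound_integrable n hn
    · rw [ae_restrict_iff' measurableSet_Ioi]
      refine ae_of_all _ fun s hs => ?_
      have hs1 : (1:ℝ) < s := hs
      have hB : (0:ℝ) < Real.sqrt (s ^ (2 * n - 2) - 1) := by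
        apply Real.sqrt_pos.mpr
        have : s < s ^ (2 * n - 2) := by
          calc s < s ^ 2 := by nlinarith
            _ ≤ s ^ (2 * n - 2) := pow_le_pow_right₀ hs1.le (by omega)
        linarith
      have hcont : ContinuousAt (fun a : ℝ => Real.sinh a *
          (1 / (Real.sqrt (Real.sinh a ^ 2 * s ^ 2 + 1) * Real.sqrt (s ^ (2 * n - 2) - 1)))) 0 := by
        apply ContinuousAt.mul Real.continuous_sinh.continuousAt
        apply ContinuousAt.div continuousAt_const
        · exact ((Real.continuous_sqrt.comp (by fun_prop)).mul continuous_const).continuousAt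
        · simp [Real.sinh_zero]
          positivity
      have := hcont.tendsto
      simp only [Real.sinh_zero, zero_mul] at this
      exact this.mono_left nhdsWithin_le_nhds

  simpa using key
end

section
/- R(a) → π/(2n−2) as a → +∞, where R(a) = sinh(a) · ∫₁^∞ (sinh²(a)·s² + 1)^(−1/2) · (s^(2n−2) − 1)^(−1/2) ds. -/
set_option maxHeartbeats 1000000
open Real MeasureTheory Filter Set

private lemma cat_deriv (m : ℕ) (hm : 1 ≤ m) {s : ℝ} (hs : 1 < s) :
    HasDerivAt (fun x : ℝ => Real.arccos ((x ^ m)⁻¹) / m)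
      (1 / (s * Real.sqrt (s ^ (2 * m) - 1))) s := by
  have hs0 : (0:ℝ) < s := by linarith
  have hS1 : (1:ℝ) < s ^ m := one_lt_pow₀ hs (by omega)
  have hS0 : (0:ℝ) < s ^ m := by linarith
  have hu1 : (s ^ m)⁻¹ < 1 := by rw [inv_lt_one_iff₀]; right; exact hS1
  have hSS : s ^ (2 * m) = (s ^ m) ^ 2 := by rw [mul_comm, pow_mul]
  have hA0 : (0:ℝ) < s ^ (2 * m) - 1 := by rw [hSS]; nlinarith
  have hA : (0:ℝ) < Real.sqrt (s ^ (2 * m) - 1) := Real.sqrt_pos.2 hA0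
  have d1 : HasDerivAt (fun x : ℝ => (x ^ m)⁻¹)
      (-(m * s ^ (m - 1)) / (s ^ m) ^ 2) s := (hasDerivAt_pow m s).inv hS0.ne'
  have hu0 : (0:ℝ) < (s ^ m)⁻¹ := by positivity
  have d2 : HasDerivAt Real.arccos (-(1 / Real.sqrt (1 - ((s ^ m)⁻¹) ^ 2))) ((s ^ m)⁻¹) :=
    Real.hasDerivAt_arccos (by linarith) hu1.ne
  have d3 := (d2.comp s d1).div_const (m : ℝ)
  convert d3 using 1
  · rfl
  · rfl
  · rfl
  have hsq : Real.sqrt (1 - ((s ^ m)⁻¹) ^ 2) = Real.sqrt (s ^ (2 * m) - 1) / s ^ m := by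
    rw [show 1 - ((s ^ m)⁻¹) ^ 2 = (s ^ (2 * m) - 1) / (s ^ m) ^ 2 by rw [hSS]; field_simp,
      Real.sqrt_div hA0.le, Real.sqrt_sq hS0.le]
  rw [hsq]
  have hm0 : (m : ℝ) ≠ 0 := Nat.cast_ne_zero.2 (by omega)
  have hpow : s ^ m = s ^ (m - 1) * s := by rw [← pow_succ]; congr 1; omega
  field_simp
  rw [hpow]; ring

private lemma cat_key (m : ℕ) (hm : 1 ≤ m) :
    Tendsto (fun a : ℝ => ∫ s in Set.Ioi (1:ℝ),
        Real.sinh a * (1 / (Real.sqrt (Real.sinh a ^ 2 * s ^ 2 + 1)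
          * Real.sqrt (s ^ (2 * m) - 1))))
      atTop (nhds (Real.pi / (2 * m))) := by
  have hm0 : (m : ℝ) ≠ 0 := Nat.cast_ne_zero.2 (by omega)
  set F : ℝ → ℝ := fun s => Real.arccos ((s ^ m)⁻¹) / m with hF
  set g : ℝ → ℝ := fun s => 1 / (s * Real.sqrt (s ^ (2 * m) - 1)) with hg
  have hderiv : ∀ s ∈ Ioi (1:ℝ), HasDerivAt F (g s) s := fun s hs => cat_deriv m hm hs
  have hcont : ContinuousWithinAt F (Ici 1) 1 := by
    apply ContinuousAt.continuousWithinAt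
    apply ContinuousAt.div_const
    apply Real.continuous_arccos.continuousAt.comp
    exact ((continuous_pow m).continuousAt).inv₀ (by simp)
  have htend : Tendsto F atTop (nhds (Real.pi / (2 * m))) := by
    have h1 : Tendsto (fun s : ℝ => (s ^ m)⁻¹) atTop (nhds 0) :=
      (tendsto_pow_atTop (by omega : m ≠ 0)).inv_tendsto_atTop
    have h2 := (Real.continuous_arccos.continuousAt (x := 0)).tendsto.comp h1
    rw [Real.arccos_zero] at h2
    have h3 := h2.div_const (m : ℝ)
    rwa [div_div, show (2:ℝ) * m = 2 * m from rfl] at h3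
  have gpos : ∀ s ∈ Ioi (1:ℝ), 0 ≤ g s := fun s hs => by
    have h1 : (1:ℝ) < s := hs
    have h0 : (0:ℝ) < s := by linarith
    positivity
  have hint : IntegrableOn g (Ioi 1) :=
    integrableOn_Ioi_deriv_of_nonneg hcont hderiv gpos htend
  have hval : ∫ s in Ioi (1:ℝ), g s = Real.pi / (2 * m) := by
    rw [integral_Ioi_of_hasDerivAt_of_nonneg hcont hderiv gpos htend]
    simp [hF, Real.arccos_one]
  rw [← hval]
  apply tendsto_integral_filter_of_dominated_convergence g
  · filter_upwards with a
    have hc : Continuous fun s : ℝ =>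
        Real.sqrt (Real.sinh a ^ 2 * s ^ 2 + 1) * Real.sqrt (s ^ (2 * m) - 1) := by
      fun_prop
    exact (measurable_const.mul (measurable_const.div hc.measurable)).aestronglyMeasurable
  · filter_upwards [eventually_gt_atTop (0:ℝ)] with a ha
    filter_upwards [ae_restrict_mem measurableSet_Ioi] with s hs
    simp only [Set.mem_Ioi] at hs
    have hs0 : (0:ℝ) < s := by linarith
    have hsh : 0 < Real.sinh a := Real.sinh_pos_iff.2 ha
    have hSS : s ^ (2 * m) = (s ^ m) ^ 2 := by rw [mul_comm, pow_mul]
    have hS1 : (1:ℝ) < s ^ m := one_lt_pow₀ hs (by omega)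
    have hA : (0:ℝ) < Real.sqrt (s ^ (2 * m) - 1) :=
      Real.sqrt_pos.2 (by rw [hSS]; nlinarith)
    have hB : 0 < Real.sqrt (Real.sinh a ^ 2 * s ^ 2 + 1) := Real.sqrt_pos.2 (by positivity)
    have hBs : Real.sinh a * s ≤ Real.sqrt (Real.sinh a ^ 2 * s ^ 2 + 1) := by
      rw [Real.le_sqrt (by positivity) (by positivity)]
      nlinarith
    rw [Real.norm_eq_abs, abs_of_nonneg (by positivity)]
    rw [hg, mul_one_div, div_le_div_iff₀ (by positivity) (by positivity), one_mul]
    calc Real.sinh a * (s * Real.sqrt (s ^ (2 * m) - 1))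
        = (Real.sinh a * s) * Real.sqrt (s ^ (2 * m) - 1) := by ring
      _ ≤ _ := mul_le_mul_of_nonneg_right hBs hA.le
  · exact hint
  · filter_upwards [ae_restrict_mem measurableSet_Ioi] with s hs
    simp only [Set.mem_Ioi] at hs
    have hs0 : (0:ℝ) < s := by linarith
    set A := Real.sqrt (s ^ (2 * m) - 1) with hA
    have hsinh : Tendsto Real.sinh atTop atTop := by
      apply tendsto_atTop_mono' atTop _ tendsto_id
      filter_upwards [eventually_ge_atTop (0:ℝ)] with x hx
      exact Real.self_le_sinh_iff.2 hx
    have h1 : Tendsto (fun a : ℝ => ((Real.sinh a) ^ 2)⁻¹) atTop (nhds 0) :=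
      ((tendsto_pow_atTop (two_ne_zero)).comp hsinh).inv_tendsto_atTop
    have h2 : ContinuousAt (fun e : ℝ => 1 / (Real.sqrt (s ^ 2 + e) * A)) 0 := by
      apply ContinuousAt.div continuousAt_const
      · exact (Real.continuous_sqrt.continuousAt.comp
          (continuousAt_const.add continuousAt_id)).mul continuousAt_const
      · simp only [add_zero, Real.sqrt_sq hs0.le]
        have hSgt : (1:ℝ) < s ^ m := one_lt_pow₀ hs (by omega)
        have hA0 : (0:ℝ) < A := Real.sqrt_pos.2 (by
          rw [show s ^ (2 * m) = (s ^ m) ^ 2 by rw [mul_comm, pow_mul]]; nlinarith)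
        positivity
    have h2' := h2.tendsto
    simp only [add_zero, Real.sqrt_sq hs0.le] at h2'
    refine (h2'.comp h1).congr' ?_
    filter_upwards [eventually_gt_atTop (0:ℝ)] with a ha
    have hsh : 0 < Real.sinh a := Real.sinh_pos_iff.2 ha
    have key : Real.sqrt (Real.sinh a ^ 2 * s ^ 2 + 1)
        = Real.sinh a * Real.sqrt (s ^ 2 + ((Real.sinh a) ^ 2)⁻¹) := by
      rw [show Real.sinh a ^ 2 * s ^ 2 + 1
          = Real.sinh a ^ 2 * (s ^ 2 + ((Real.sinh a) ^ 2)⁻¹) by field_simp,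
        Real.sqrt_mul (by positivity), Real.sqrt_sq hsh.le]
    simp only [Function.comp]
    rw [key]
    have hQ : 0 < Real.sqrt (s ^ 2 + ((Real.sinh a) ^ 2)⁻¹) := Real.sqrt_pos.2 (by positivity)
    field_simp

/-- R(a) → π/(2n−2) as a → +∞. -/
theorem catenoid_height_tendsto_pi (n : ℕ) (hn : 2 ≤ n) :
    Tendsto (fun a : ℝ => Real.sinh a * (∫ s in Set.Ioi (1:ℝ),
        1 / (Real.sqrt (Real.sinh a ^ 2 * s ^ 2 + 1) * Real.sqrt (s ^ (2 * n - 2) - 1))))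
      atTop (nhds (Real.pi / (2 * (n : ℝ) - 2))) := by
  have h := cat_key (n - 1) (by omega)
  rw [show 2 * (n - 1) = 2 * n - 2 by omega] at h
  simp_rw [integral_const_mul] at h
  have e : Real.pi / (2 * ((n:ℝ) - 1)) = Real.pi / (2 * (n : ℝ) - 2) := by ring_nf
  rw [Nat.cast_sub (by omega : 1 ≤ n), Nat.cast_one, e] at h
  exact h
end

section
/- The function T(a) = cosh(a) · ∫₁^∞ (s^(2n−2) − 1)^(−1/2) · (cosh²(a)·s² − 1)^(−1/2) ds is strictly decreasing in a on (0, ∞). -/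
open Real MeasureTheory

private lemma integrable_aux (m : ℕ) (hm : 2 ≤ m) (c : ℝ) (hc : 1 < c) :
    IntegrableOn (fun s : ℝ => 1 / (Real.sqrt (s ^ m - 1) * Real.sqrt (c ^ 2 * s ^ 2 - 1)))
      (Set.Ioi 1) := by
  have hmeas : AEStronglyMeasurable
      (fun s : ℝ => 1 / (Real.sqrt (s ^ m - 1) * Real.sqrt (c ^ 2 * s ^ 2 - 1))) volume := by
    have hcont : Continuous fun s : ℝ =>
        Real.sqrt (s ^ m - 1) * Real.sqrt (c ^ 2 * s ^ 2 - 1) :=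
      (((continuous_pow m).sub continuous_const).sqrt).mul
        (((continuous_const.mul (continuous_pow 2)).sub continuous_const).sqrt)
    exact (measurable_const.div hcont.measurable).aestronglyMeasurable
  have hsplit : Set.Ioi (1:ℝ) = Set.Ioc 1 2 ∪ Set.Ioi 2 :=
    (Set.Ioc_union_Ioi_eq_Ioi (by norm_num)).symm
  rw [hsplit]
  apply IntegrableOn.union
  · -- near s = 1
    have hg : IntegrableOn (fun s : ℝ => (Real.sqrt (c ^ 2 - 1))⁻¹ * (s - 1) ^ (-(1/2) : ℝ))
        (Set.Ioc 1 2) := by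
      have h0 : IntervalIntegrable (fun x : ℝ => x ^ (-(1/2) : ℝ)) volume 0 1 :=
        intervalIntegral.intervalIntegrable_rpow' (by norm_num)
      have h1 := h0.comp_sub_right 1
      norm_num at h1
      rw [intervalIntegrable_iff_integrableOn_Ioc_of_le (by norm_num)] at h1
      exact h1.const_mul _
    refine hg.mono' hmeas.restrict ?_
    rw [ae_restrict_iff' measurableSet_Ioc]
    filter_upwards with s hs
    obtain ⟨hs1, hs2⟩ := hs
    have hA : Real.sqrt (s - 1) ≤ Real.sqrt (s ^ m - 1) := by
      apply Real.sqrt_le_sqrt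
      have : s ≤ s ^ m := le_self_pow₀ (by linarith) (by omega)
      linarith
    have hB : Real.sqrt (c ^ 2 - 1) ≤ Real.sqrt (c ^ 2 * s ^ 2 - 1) := by
      apply Real.sqrt_le_sqrt
      have h1 : (1:ℝ) ≤ s ^ 2 := by nlinarith
      nlinarith [mul_le_mul_of_nonneg_left h1 (sq_nonneg c)]
    have hApos : (0:ℝ) < Real.sqrt (s - 1) := Real.sqrt_pos.mpr (by linarith)
    have hBpos : (0:ℝ) < Real.sqrt (c ^ 2 - 1) := Real.sqrt_pos.mpr (by nlinarith)
    have hle : (1:ℝ) / (Real.sqrt (s ^ m - 1) * Real.sqrt (c ^ 2 * s ^ 2 - 1)) ≤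
        1 / (Real.sqrt (s - 1) * Real.sqrt (c ^ 2 - 1)) := by
      apply one_div_le_one_div_of_le (by positivity)
      exact mul_le_mul hA hB hBpos.le (by positivity)
    rw [Real.norm_eq_abs, abs_of_nonneg (by positivity)]
    refine hle.trans (le_of_eq ?_)
    rw [Real.rpow_neg (by linarith), ← Real.sqrt_eq_rpow]
    rw [one_div, mul_inv, mul_comm]
  · -- tail
    have hg : IntegrableOn (fun s : ℝ => 2 * s ^ (-(((m:ℝ) + 2)/2)))
        (Set.Ioi 2) := by
      have := integrableOn_Ioi_rpow_of_lt (a := -(((m:ℝ) + 2)/2))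
        (by
          have : (2:ℝ) ≤ (m:ℝ) := by exact_mod_cast hm
          linarith) (c := 2) (by norm_num)
      exact this.const_mul 2
    refine hg.mono' hmeas.restrict ?_
    rw [ae_restrict_iff' measurableSet_Ioi]
    filter_upwards with s hs
    have hs2 : (2:ℝ) < s := hs
    have hs0 : (0:ℝ) < s := by linarith
    have hsm : (2:ℝ) ≤ s ^ m := by
      calc (2:ℝ) ≤ 2 ^ m := by
            have : (2:ℝ)^1 ≤ 2^m := pow_le_pow_right₀ (by norm_num) (by omega)
            simpa using this
        _ ≤ s ^ m := pow_le_pow_left₀ (by norm_num) hs2.le m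
    have hA : Real.sqrt (s ^ m / 2) ≤ Real.sqrt (s ^ m - 1) := by
      apply Real.sqrt_le_sqrt; linarith
    have hB : Real.sqrt (s ^ 2 / 2) ≤ Real.sqrt (c ^ 2 * s ^ 2 - 1) := by
      apply Real.sqrt_le_sqrt
      have h1 : s ^ 2 ≤ c ^ 2 * s ^ 2 := by nlinarith [mul_nonneg (by nlinarith : (0:ℝ) ≤ c ^ 2 - 1) (sq_nonneg s)]
      nlinarith
    have hApos : (0:ℝ) < Real.sqrt (s ^ m / 2) := Real.sqrt_pos.mpr (by positivity)
    have hBpos : (0:ℝ) < Real.sqrt (s ^ 2 / 2) := Real.sqrt_pos.mpr (by positivity)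
    have hle : (1:ℝ) / (Real.sqrt (s ^ m - 1) * Real.sqrt (c ^ 2 * s ^ 2 - 1)) ≤
        1 / (Real.sqrt (s ^ m / 2) * Real.sqrt (s ^ 2 / 2)) := by
      apply one_div_le_one_div_of_le (by positivity)
      exact mul_le_mul hA hB hBpos.le (by positivity)
    rw [Real.norm_eq_abs, abs_of_nonneg (by positivity)]
    refine hle.trans (le_of_eq ?_)
    rw [← Real.sqrt_mul (by positivity)]
    have hprod : s ^ m / 2 * (s ^ 2 / 2) = s ^ (m + 2) / 4 := by ring
    rw [hprod]
    have h4 : Real.sqrt (s ^ (m+2) / 4) = Real.sqrt (s ^ (m+2)) / 2 := by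
      rw [show s ^ (m+2) / 4 = s ^ (m+2) * (1/2)^2 by ring, Real.sqrt_mul (by positivity),
        Real.sqrt_sq (by norm_num)]
      ring
    rw [h4]
    have hsq : Real.sqrt (s ^ (m+2)) = s ^ (((m:ℝ)+2)/2) := by
      rw [Real.sqrt_eq_rpow, ← Real.rpow_natCast s (m+2), ← Real.rpow_mul hs0.le]
      congr 1
      push_cast
      ring
    rw [hsq, Real.rpow_neg hs0.le]
    have hpow : (0:ℝ) < s ^ (((m:ℝ)+2)/2) := Real.rpow_pos_of_pos hs0 _
    field_simp

/-- T is strictly decreasing on (0, ∞). -/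
theorem md_asymptotic_height_strictAntiOn (n : ℕ) (hn : 2 ≤ n) :
    StrictAntiOn (fun a : ℝ => Real.cosh a * (∫ s in Set.Ioi (1:ℝ),
        1 / (Real.sqrt (s ^ (2 * n - 2) - 1) * Real.sqrt (Real.cosh a ^ 2 * s ^ 2 - 1))))
      (Set.Ioi 0) := by
  set m := 2 * n - 2 with hmdef
  have hm : 2 ≤ m := by omega
  intro a ha b hb hab
  simp only [Set.mem_Ioi] at ha hb
  have hca : 1 < Real.cosh a := Real.one_lt_cosh.mpr (ne_of_gt ha)
  have hcb : 1 < Real.cosh b := Real.one_lt_cosh.mpr (ne_of_gt hb)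
  have hcab : Real.cosh a < Real.cosh b := by
    rw [Real.cosh_lt_cosh, abs_of_pos ha, abs_of_pos hb]; exact hab
  -- rewrite c * ∫ F = ∫ G where G c s = 1/(A * sqrt(s^2 - (c^2)⁻¹))
  have key : ∀ c : ℝ, 1 < c →
      c * (∫ s in Set.Ioi (1:ℝ),
        1 / (Real.sqrt (s ^ m - 1) * Real.sqrt (c ^ 2 * s ^ 2 - 1))) =
      ∫ s in Set.Ioi (1:ℝ),
        1 / (Real.sqrt (s ^ m - 1) * Real.sqrt (s ^ 2 - (c ^ 2)⁻¹)) := by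
    intro c hc
    have hc0 : (0:ℝ) < c := by linarith
    rw [← integral_const_mul]
    apply integral_congr_ae
    filter_upwards with s
    have hsq : Real.sqrt (c ^ 2 * s ^ 2 - 1) = c * Real.sqrt (s ^ 2 - (c ^ 2)⁻¹) := by
      rw [show c ^ 2 * s ^ 2 - 1 = c ^ 2 * (s ^ 2 - (c ^ 2)⁻¹) by
          field_simp, Real.sqrt_mul (by positivity), Real.sqrt_sq hc0.le]
    rw [hsq]
    rw [show Real.sqrt (s ^ m - 1) * (c * Real.sqrt (s ^ 2 - (c ^ 2)⁻¹)) =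
        c * (Real.sqrt (s ^ m - 1) * Real.sqrt (s ^ 2 - (c ^ 2)⁻¹)) by ring]
    rw [mul_one_div, ← div_div, div_self (ne_of_gt hc0)]
  have hGint : ∀ c : ℝ, 1 < c → IntegrableOn
      (fun s : ℝ => 1 / (Real.sqrt (s ^ m - 1) * Real.sqrt (s ^ 2 - (c ^ 2)⁻¹)))
      (Set.Ioi 1) := by
    intro c hc
    have hc0 : (0:ℝ) < c := by linarith
    have heq : (fun s : ℝ => 1 / (Real.sqrt (s ^ m - 1) * Real.sqrt (s ^ 2 - (c ^ 2)⁻¹))) =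
        (fun s : ℝ => c * (1 / (Real.sqrt (s ^ m - 1) * Real.sqrt (c ^ 2 * s ^ 2 - 1)))) := by
      funext s
      have hsq : Real.sqrt (c ^ 2 * s ^ 2 - 1) = c * Real.sqrt (s ^ 2 - (c ^ 2)⁻¹) := by
        rw [show c ^ 2 * s ^ 2 - 1 = c ^ 2 * (s ^ 2 - (c ^ 2)⁻¹) by
            field_simp, Real.sqrt_mul (by positivity), Real.sqrt_sq hc0.le]
      rw [hsq]
      rw [show Real.sqrt (s ^ m - 1) * (c * Real.sqrt (s ^ 2 - (c ^ 2)⁻¹)) =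
          c * (Real.sqrt (s ^ m - 1) * Real.sqrt (s ^ 2 - (c ^ 2)⁻¹)) by ring]
      rw [mul_one_div, show c / (c * (Real.sqrt (s ^ m - 1) * Real.sqrt (s ^ 2 - (c ^ 2)⁻¹))) =
          c / c / (Real.sqrt (s ^ m - 1) * Real.sqrt (s ^ 2 - (c ^ 2)⁻¹)) from
          (div_div _ _ _).symm, div_self (ne_of_gt hc0)]
    rw [heq]
    exact (integrable_aux m hm c hc).const_mul c
  simp only
  rw [key _ hca, key _ hcb]
  -- now strict inequality of the two integrals
  have hint_a := hGint _ hca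
  have hint_b := hGint _ hcb
  rw [← sub_pos, ← integral_sub hint_a hint_b]
  have hpt : ∀ s : ℝ, s ∈ Set.Ioi (1:ℝ) →
      0 < 1 / (Real.sqrt (s ^ m - 1) * Real.sqrt (s ^ 2 - (Real.cosh a ^ 2)⁻¹)) -
        1 / (Real.sqrt (s ^ m - 1) * Real.sqrt (s ^ 2 - (Real.cosh b ^ 2)⁻¹)) := by
    intro s hs
    have hs1 : (1:ℝ) < s := hs
    have hA : (0:ℝ) < Real.sqrt (s ^ m - 1) := by
      apply Real.sqrt_pos.mpr
      have : (1:ℝ) < s ^ m := one_lt_pow₀ hs1 (by omega)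
      linarith
    have hia : ((Real.cosh a) ^ 2)⁻¹ < 1 := by
      rw [inv_lt_one_iff₀]; right; nlinarith
    have hZa : (0:ℝ) < Real.sqrt (s ^ 2 - (Real.cosh a ^ 2)⁻¹) := by
      apply Real.sqrt_pos.mpr; nlinarith
    have hinv : ((Real.cosh b) ^ 2)⁻¹ < ((Real.cosh a) ^ 2)⁻¹ := by
      apply inv_strictAnti₀ (by nlinarith) (by nlinarith)
    have hZ : Real.sqrt (s ^ 2 - (Real.cosh a ^ 2)⁻¹) <
        Real.sqrt (s ^ 2 - (Real.cosh b ^ 2)⁻¹) := by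
      apply Real.sqrt_lt_sqrt (by nlinarith); linarith
    have := one_div_lt_one_div_of_lt (by positivity)
      (mul_lt_mul_of_pos_left hZ hA)
    linarith
  rw [setIntegral_pos_iff_support_of_nonneg_ae]
  · have hsub : Set.Ioi (1:ℝ) ⊆ (Function.support fun s =>
        1 / (Real.sqrt (s ^ m - 1) * Real.sqrt (s ^ 2 - (Real.cosh a ^ 2)⁻¹)) -
        1 / (Real.sqrt (s ^ m - 1) * Real.sqrt (s ^ 2 - (Real.cosh b ^ 2)⁻¹))) ∩ Set.Ioi 1 :=
      fun s hs => ⟨ne_of_gt (hpt s hs), hs⟩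
    refine lt_of_lt_of_le ?_ (measure_mono hsub)
    rw [Real.volume_Ioi]
    exact ENNReal.zero_lt_top
  · filter_upwards [ae_restrict_mem measurableSet_Ioi] with s hs using (hpt s hs).le
  · exact hint_a.sub hint_b
end

section
/- T(a) → +∞ as a → 0⁺, where T(a) = cosh(a) · ∫₁^∞ (s^(2n−2) − 1)^(−1/2) · (cosh²(a)·s² − 1)^(−1/2) ds. -/
open Real MeasureTheory Filter

namespace MdAux

noncomputable def Cn (n : ℕ) : ℝ :=
    (Real.sqrt ((2 * n : ℝ) * 2 ^ (2 * n)) * Real.sqrt 24)⁻¹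

lemma Cn_pos (n : ℕ) (hn : 2 ≤ n) : 0 < Cn n := by
  have h1 : (0:ℝ) < (2 * n : ℝ) * 2 ^ (2 * n) := by positivity
  unfold Cn
  positivity

lemma aux_pow_le (n : ℕ) (hn : 2 ≤ n) (s : ℝ) (hs1 : 1 ≤ s) (hs2 : s ≤ 2) :
    s ^ (2 * n - 2) - 1 ≤ ((2 * n : ℝ) * 2 ^ (2 * n)) * (s - 1) := by
  have h := geom_sum_mul s (2 * n - 2)
  rw [← h]
  have hsum : (∑ i ∈ Finset.range (2 * n - 2), s ^ i) ≤ (2 * n : ℝ) * 2 ^ (2 * n) := by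
    calc (∑ i ∈ Finset.range (2 * n - 2), s ^ i)
        ≤ ∑ _i ∈ Finset.range (2 * n - 2), (2:ℝ) ^ (2 * n) := by
          apply Finset.sum_le_sum
          intro i hi
          calc s ^ i ≤ 2 ^ i := pow_le_pow_left₀ (by linarith) hs2 i
            _ ≤ 2 ^ (2 * n) := pow_le_pow_right₀ (by norm_num)
                (by have := Finset.mem_range.mp hi; omega)
      _ = ((2 * n - 2 : ℕ) : ℝ) * 2 ^ (2 * n) := by
          rw [Finset.sum_const, Finset.card_range, nsmul_eq_mul]
      _ ≤ (2 * n : ℝ) * 2 ^ (2 * n) := by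
          have : ((2 * n - 2 : ℕ) : ℝ) ≤ (2 * n : ℝ) := by
            have : (2 * n - 2 : ℕ) ≤ 2 * n := by omega
            exact_mod_cast Nat.cast_le.mpr this |>.trans (by push_cast; linarith)
          have h2 : (0:ℝ) ≤ 2 ^ (2 * n) := by positivity
          exact mul_le_mul_of_nonneg_right this h2
  exact mul_le_mul_of_nonneg_right hsum (by linarith)

lemma aux_meas (n : ℕ) (c : ℝ) :
    Measurable (fun s : ℝ =>
      1 / (Real.sqrt (s ^ (2 * n - 2) - 1) * Real.sqrt (c ^ 2 * s ^ 2 - 1))) := by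
  have h1 : Measurable fun s : ℝ => Real.sqrt (s ^ (2 * n - 2) - 1) :=
    Real.continuous_sqrt.measurable.comp ((measurable_id.pow_const _).sub measurable_const)
  have h2 : Measurable fun s : ℝ => Real.sqrt (c ^ 2 * s ^ 2 - 1) :=
    Real.continuous_sqrt.measurable.comp
      ((measurable_const.mul (measurable_id.pow_const _)).sub measurable_const)
  exact measurable_const.div (h1.mul h2)

lemma aux_integrable (n : ℕ) (hn : 2 ≤ n) (c : ℝ) (hc1 : 1 < c) :
    IntegrableOn (fun s : ℝ =>
      1 / (Real.sqrt (s ^ (2 * n - 2) - 1) * Real.sqrt (c ^ 2 * s ^ 2 - 1)))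
      (Set.Ioi 1) := by
  have hm : 2 ≤ 2 * n - 2 := by omega
  rw [← Set.Ioc_union_Ioi_eq_Ioi (by norm_num : (1:ℝ) ≤ 2)]
  apply MeasureTheory.IntegrableOn.union
  · -- on Ioc 1 2, dominate by const * (s-1)^(-1/2)
    have hbase : IntervalIntegrable (fun x : ℝ => x ^ (-(1/2) : ℝ)) volume 0 1 :=
      intervalIntegral.intervalIntegrable_rpow' (by norm_num)
    have hshift := hbase.comp_sub_right 1
    norm_num at hshift
    have hint : IntegrableOn (fun s : ℝ => (s - 1) ^ (-(1/2) : ℝ)) (Set.Ioc 1 2) :=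
      hshift.1
    have hg : Integrable (fun s : ℝ =>
        (Real.sqrt 2 * Real.sqrt (c ^ 2 - 1))⁻¹ * (s - 1) ^ (-(1/2) : ℝ))
        (volume.restrict (Set.Ioc 1 2)) := hint.const_mul _
    apply MeasureTheory.Integrable.mono' hg (aux_meas n c).aestronglyMeasurable.restrict
    filter_upwards [ae_restrict_mem measurableSet_Ioc] with s hs
    obtain ⟨hs1, hs2⟩ := hs
    have hA : s ^ 2 - 1 ≤ s ^ (2 * n - 2) - 1 := by
      have : s ^ 2 ≤ s ^ (2 * n - 2) := pow_le_pow_right₀ (by linarith) hm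
      linarith
    have hB : c ^ 2 - 1 ≤ c ^ 2 * s ^ 2 - 1 := by
      nlinarith [mul_nonneg (sq_nonneg c) (show (0:ℝ) ≤ s ^ 2 - 1 by nlinarith)]
    have hc2pos : (0:ℝ) < c ^ 2 - 1 := by nlinarith
    have h2s : 2 * (s - 1) ≤ s ^ 2 - 1 := by nlinarith
    have hnn : 0 ≤ (1 : ℝ) / (Real.sqrt (s ^ (2 * n - 2) - 1) * Real.sqrt (c ^ 2 * s ^ 2 - 1)) := by
      positivity
    rw [Real.norm_of_nonneg hnn]
    have hrpow : (s - 1) ^ (-(1/2) : ℝ) = (Real.sqrt (s - 1))⁻¹ := by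
      rw [Real.rpow_neg (by linarith), Real.sqrt_eq_rpow]
    rw [hrpow]
    have key : Real.sqrt 2 * Real.sqrt (c ^ 2 - 1) * Real.sqrt (s - 1)
        ≤ Real.sqrt (s ^ (2 * n - 2) - 1) * Real.sqrt (c ^ 2 * s ^ 2 - 1) := by
      have e1 : Real.sqrt 2 * Real.sqrt (s - 1) = Real.sqrt (2 * (s - 1)) :=
        (Real.sqrt_mul (by norm_num) _).symm
      have e2 : Real.sqrt (2 * (s - 1)) ≤ Real.sqrt (s ^ (2 * n - 2) - 1) :=
        Real.sqrt_le_sqrt (by linarith)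
      have e3 : Real.sqrt (c ^ 2 - 1) ≤ Real.sqrt (c ^ 2 * s ^ 2 - 1) :=
        Real.sqrt_le_sqrt hB
      calc Real.sqrt 2 * Real.sqrt (c ^ 2 - 1) * Real.sqrt (s - 1)
          = Real.sqrt (2 * (s - 1)) * Real.sqrt (c ^ 2 - 1) := by rw [← e1]; ring
        _ ≤ Real.sqrt (s ^ (2 * n - 2) - 1) * Real.sqrt (c ^ 2 * s ^ 2 - 1) := by
            apply mul_le_mul e2 e3 (Real.sqrt_nonneg _) (Real.sqrt_nonneg _)
    have hpos : (0:ℝ) < Real.sqrt 2 * Real.sqrt (c ^ 2 - 1) * Real.sqrt (s - 1) := by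
      have : (0:ℝ) < s - 1 := by linarith
      positivity
    calc 1 / (Real.sqrt (s ^ (2 * n - 2) - 1) * Real.sqrt (c ^ 2 * s ^ 2 - 1))
        ≤ 1 / (Real.sqrt 2 * Real.sqrt (c ^ 2 - 1) * Real.sqrt (s - 1)) :=
          one_div_le_one_div_of_le hpos key
      _ = (Real.sqrt 2 * Real.sqrt (c ^ 2 - 1))⁻¹ * (Real.sqrt (s - 1))⁻¹ := by
          rw [one_div, mul_inv]
  · -- on Ioi 2, dominate by (4/3) * s^(-2)
    have hg : Integrable (fun s : ℝ => (4/3 : ℝ) * s ^ (-2 : ℝ))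
        (volume.restrict (Set.Ioi 2)) :=
      (integrableOn_Ioi_rpow_of_lt (by norm_num) (by norm_num)).const_mul _
    apply MeasureTheory.Integrable.mono' hg (aux_meas n c).aestronglyMeasurable.restrict
    filter_upwards [ae_restrict_mem measurableSet_Ioi] with s hs
    have hs2 : (2:ℝ) < s := hs
    have hA : s ^ 2 - 1 ≤ s ^ (2 * n - 2) - 1 := by
      have : s ^ 2 ≤ s ^ (2 * n - 2) := pow_le_pow_right₀ (by linarith) hm
      linarith
    have hB : s ^ 2 - 1 ≤ c ^ 2 * s ^ 2 - 1 := by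
      nlinarith [mul_nonneg (show (0:ℝ) ≤ c ^ 2 - 1 by nlinarith) (sq_nonneg s)]
    have hApos : (0:ℝ) < s ^ 2 - 1 := by nlinarith
    have hnn : 0 ≤ (1 : ℝ) / (Real.sqrt (s ^ (2 * n - 2) - 1) * Real.sqrt (c ^ 2 * s ^ 2 - 1)) := by
      positivity
    rw [Real.norm_of_nonneg hnn]
    have key : (3/4 : ℝ) * s ^ 2
        ≤ Real.sqrt (s ^ (2 * n - 2) - 1) * Real.sqrt (c ^ 2 * s ^ 2 - 1) := by
      have e1 : Real.sqrt (s ^ 2 - 1) * Real.sqrt (s ^ 2 - 1) = s ^ 2 - 1 :=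
        Real.mul_self_sqrt hApos.le
      have e2 : Real.sqrt (s ^ 2 - 1) ≤ Real.sqrt (s ^ (2 * n - 2) - 1) :=
        Real.sqrt_le_sqrt hA
      have e3 : Real.sqrt (s ^ 2 - 1) ≤ Real.sqrt (c ^ 2 * s ^ 2 - 1) :=
        Real.sqrt_le_sqrt hB
      have e4 : (3/4 : ℝ) * s ^ 2 ≤ s ^ 2 - 1 := by nlinarith
      calc (3/4 : ℝ) * s ^ 2 ≤ s ^ 2 - 1 := e4
        _ = Real.sqrt (s ^ 2 - 1) * Real.sqrt (s ^ 2 - 1) := e1.symm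
        _ ≤ Real.sqrt (s ^ (2 * n - 2) - 1) * Real.sqrt (c ^ 2 * s ^ 2 - 1) :=
            mul_le_mul e2 e3 (Real.sqrt_nonneg _) (Real.sqrt_nonneg _)
    have hpos : (0:ℝ) < (3/4 : ℝ) * s ^ 2 := by positivity
    have hrpow : s ^ (-2 : ℝ) = (s ^ 2)⁻¹ := by
      rw [Real.rpow_neg (by linarith), show (2:ℝ) = ((2:ℕ):ℝ) by norm_num,
        Real.rpow_natCast]
    calc 1 / (Real.sqrt (s ^ (2 * n - 2) - 1) * Real.sqrt (c ^ 2 * s ^ 2 - 1))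
        ≤ 1 / ((3/4 : ℝ) * s ^ 2) := one_div_le_one_div_of_le hpos key
      _ = (4/3 : ℝ) * s ^ (-2 : ℝ) := by
          rw [hrpow]; field_simp
      
lemma aux_lower (n : ℕ) (hn : 2 ≤ n) (c : ℝ) (hc1 : 1 < c) (hc2 : c < 2)
    (hε : c ^ 2 - 1 < 1) :
    Cn n * (-Real.log (c ^ 2 - 1)) ≤ ∫ s in Set.Ioi (1:ℝ),
      1 / (Real.sqrt (s ^ (2 * n - 2) - 1) * Real.sqrt (c ^ 2 * s ^ 2 - 1)) := by
  set ε := c ^ 2 - 1 with hεdef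
  have hεpos : 0 < ε := by nlinarith
  have hε2 : 1 + ε ≤ 2 := by linarith
  set f : ℝ → ℝ := fun s =>
    1 / (Real.sqrt (s ^ (2 * n - 2) - 1) * Real.sqrt (c ^ 2 * s ^ 2 - 1)) with hf
  set K : ℝ := (2 * n : ℝ) * 2 ^ (2 * n) with hK
  have hKpos : (0:ℝ) < K := by positivity
  have hfint : IntegrableOn f (Set.Ioi 1) := aux_integrable n hn c hc1
  -- Step 1: ∫ over Ioc (1+ε) 2 ≤ ∫ over Ioi 1
  have step1 : (∫ s in Set.Ioc (1 + ε) 2, f s) ≤ ∫ s in Set.Ioi (1:ℝ), f s := by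
    apply MeasureTheory.setIntegral_mono_set hfint
    · filter_upwards with s; positivity
    · apply Filter.Eventually.of_forall
      intro s hs
      exact lt_trans (by linarith) hs.1
  -- Step 2: pointwise bound on Ioc (1+ε) 2
  have step2 : (∫ s in Set.Ioc (1 + ε) 2, Cn n * (s - 1)⁻¹)
      ≤ ∫ s in Set.Ioc (1 + ε) 2, f s := by
    apply MeasureTheory.setIntegral_mono_on
    · -- integrability of g
      apply (ContinuousOn.intervalIntegrable ?_).1
      apply ContinuousOn.mul continuousOn_const
      apply ContinuousOn.inv₀
      · exact (continuousOn_id.sub continuousOn_const)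
      · intro s hs
        rw [Set.uIcc_of_le (by linarith)] at hs
        have : 1 + ε ≤ s := hs.1
        intro h
        have : s = 1 := by linarith [sub_eq_zero.mp h]
        linarith
    · exact hfint.mono_set (fun s hs => lt_trans (by linarith) hs.1)
    · exact measurableSet_Ioc
    · intro s hs
      obtain ⟨hs1, hs2⟩ := hs
      have hs1' : 1 < s := by linarith
      have hεs : ε < s - 1 := by linarith
      have hA : s ^ (2 * n - 2) - 1 ≤ K * (s - 1) :=
        aux_pow_le n hn s hs1'.le hs2
      have hB : c ^ 2 * s ^ 2 - 1 ≤ 24 * (s - 1) := by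
        have h1 : (0:ℝ) ≤ (4 - c ^ 2) * (s ^ 2 - 1) :=
          mul_nonneg (by nlinarith) (by nlinarith)
        have h2 : (0:ℝ) ≤ (s - 1) * (2 - s) := mul_nonneg (by linarith) (by linarith)
        have h3 : c ^ 2 - 1 < s - 1 := hεdef ▸ hεs
        nlinarith [h1, h2, h3]
      have hApos : (0:ℝ) < s ^ (2 * n - 2) - 1 := by
        have : (1:ℝ) < s ^ (2 * n - 2) := one_lt_pow₀ hs1' (by omega)
        linarith
      have hBpos : (0:ℝ) < c ^ 2 * s ^ 2 - 1 := by nlinarith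
      have key : Real.sqrt (s ^ (2 * n - 2) - 1) * Real.sqrt (c ^ 2 * s ^ 2 - 1)
          ≤ Real.sqrt K * Real.sqrt 24 * (s - 1) := by
        have e1 : Real.sqrt (s ^ (2 * n - 2) - 1) ≤ Real.sqrt K * Real.sqrt (s - 1) := by
          rw [← Real.sqrt_mul hKpos.le]
          exact Real.sqrt_le_sqrt hA
        have e2 : Real.sqrt (c ^ 2 * s ^ 2 - 1) ≤ Real.sqrt 24 * Real.sqrt (s - 1) := by
          rw [← Real.sqrt_mul (by norm_num)]
          exact Real.sqrt_le_sqrt hB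
        calc Real.sqrt (s ^ (2 * n - 2) - 1) * Real.sqrt (c ^ 2 * s ^ 2 - 1)
            ≤ (Real.sqrt K * Real.sqrt (s - 1)) * (Real.sqrt 24 * Real.sqrt (s - 1)) :=
              mul_le_mul e1 e2 (Real.sqrt_nonneg _) (by positivity)
          _ = Real.sqrt K * Real.sqrt 24 * (Real.sqrt (s - 1) * Real.sqrt (s - 1)) := by
              ring
          _ = Real.sqrt K * Real.sqrt 24 * (s - 1) := by
              rw [Real.mul_self_sqrt (by linarith)]
      have hABpos : (0:ℝ) < Real.sqrt (s ^ (2 * n - 2) - 1) * Real.sqrt (c ^ 2 * s ^ 2 - 1) := by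
        positivity
      have : 1 / (Real.sqrt K * Real.sqrt 24 * (s - 1)) ≤ f s :=
        one_div_le_one_div_of_le hABpos key
      calc Cn n * (s - 1)⁻¹ = 1 / (Real.sqrt K * Real.sqrt 24 * (s - 1)) := by
            have hCnK : Cn n = (Real.sqrt K * Real.sqrt 24)⁻¹ := rfl
            rw [hCnK, one_div, ← mul_inv]
        _ ≤ f s := this
  -- Step 3: compute the lower integral
  have step3 : (∫ s in Set.Ioc (1 + ε) 2, Cn n * (s - 1)⁻¹) = Cn n * (-Real.log ε) := by
    rw [← intervalIntegral.integral_of_le (by linarith), intervalIntegral.integral_const_mul]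
    congr 1
    have := intervalIntegral.integral_comp_sub_right (fun x : ℝ => x⁻¹) 1
      (a := 1 + ε) (b := 2)
    rw [show (1 + ε - 1 : ℝ) = ε by ring, show (2 - 1 : ℝ) = 1 by norm_num] at this
    rw [this, integral_inv]
    · rw [Real.log_div one_ne_zero hεpos.ne']
      simp
    · rw [Set.uIcc_of_le (by linarith)]
      intro h
      exact absurd h.1 (by linarith)
  linarith [step1, step2, step3.ge.trans step2]

end MdAux

/-- T(a) → +∞ as a → 0⁺. -/
theorem md_asymptotic_height_tendsto_atTop (n : ℕ) (hn : 2 ≤ n) :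
    Tendsto (fun a : ℝ => Real.cosh a * (∫ s in Set.Ioi (1:ℝ),
        1 / (Real.sqrt (s ^ (2 * n - 2) - 1) * Real.sqrt (Real.cosh a ^ 2 * s ^ 2 - 1))))
      (nhdsWithin 0 (Set.Ioi 0)) atTop := by
  have hCn := MdAux.Cn_pos n hn
  apply tendsto_atTop_mono' (nhdsWithin 0 (Set.Ioi 0))
    (f₁ := fun a : ℝ => MdAux.Cn n * (-Real.log (Real.cosh a ^ 2 - 1)))
  · -- eventual inequality
    filter_upwards [Ioo_mem_nhdsGT_of_mem (show (0:ℝ) ∈ Set.Ico 0 (1/2) by norm_num)]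
      with a ha
    obtain ⟨ha0, ha12⟩ := ha
    have hc1 : 1 < Real.cosh a := Real.one_lt_cosh.mpr (ne_of_gt ha0)
    -- cosh a < 1.325
    have hexp_half : Real.exp (1/2) < 1.65 := by
      have hsq : Real.exp (1/2) * Real.exp (1/2) = Real.exp 1 := by
        rw [← Real.exp_add]; norm_num
      nlinarith [Real.exp_one_lt_d9, Real.exp_pos (1/2 : ℝ)]
    have hexpa : Real.exp a < 1.65 := lt_trans (Real.exp_lt_exp.mpr ha12) hexp_half
    have hexpna : Real.exp (-a) < 1 := by
      have := Real.exp_lt_exp.mpr (show -a < 0 by linarith)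
      rwa [Real.exp_zero] at this
    have hcosh_lt : Real.cosh a < 1.325 := by
      rw [Real.cosh_eq]; linarith
    have hc2 : Real.cosh a < 2 := by linarith
    have hε : Real.cosh a ^ 2 - 1 < 1 := by nlinarith
    have hlow := MdAux.aux_lower n hn (Real.cosh a) hc1 hc2 hε
    have hint_nonneg : 0 ≤ ∫ s in Set.Ioi (1:ℝ),
        1 / (Real.sqrt (s ^ (2 * n - 2) - 1) * Real.sqrt (Real.cosh a ^ 2 * s ^ 2 - 1)) := by
      apply MeasureTheory.setIntegral_nonneg measurableSet_Ioi
      intro s _; positivity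
    calc MdAux.Cn n * (-Real.log (Real.cosh a ^ 2 - 1))
        ≤ ∫ s in Set.Ioi (1:ℝ),
          1 / (Real.sqrt (s ^ (2 * n - 2) - 1) * Real.sqrt (Real.cosh a ^ 2 * s ^ 2 - 1)) :=
          hlow
      _ ≤ Real.cosh a * ∫ s in Set.Ioi (1:ℝ),
          1 / (Real.sqrt (s ^ (2 * n - 2) - 1) * Real.sqrt (Real.cosh a ^ 2 * s ^ 2 - 1)) :=
          le_mul_of_one_le_left hint_nonneg hc1.le
  · -- the lower bound tends to atTop
    apply Filter.Tendsto.const_mul_atTop hCn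
    apply Filter.Tendsto.comp tendsto_neg_atBot_atTop
    apply Filter.Tendsto.comp Real.tendsto_log_nhdsGT_zero
    apply tendsto_nhdsWithin_of_tendsto_nhds_of_eventually_within
    · have : Continuous (fun a : ℝ => Real.cosh a ^ 2 - 1) :=
        (Real.continuous_cosh.pow 2).sub continuous_const
      exact (this.tendsto' 0 0 (by simp)).mono_left nhdsWithin_le_nhds
    · filter_upwards [self_mem_nhdsWithin] with a ha
      have : 1 < Real.cosh a := Real.one_lt_cosh.mpr (ne_of_gt ha)
      have : (1:ℝ) < Real.cosh a ^ 2 := by nlinarith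
      exact Set.mem_Ioi.mpr (by linarith)
end

section
/- T(a) → π/(2n−2) as a → +∞, where T(a) = cosh(a) · ∫₁^∞ (s^(2n−2) − 1)^(−1/2) · (cosh²(a)·s² − 1)^(−1/2) ds. -/
open Real MeasureTheory Filter Set

lemma hasDeriv_aux (m : ℕ) (hm : 1 ≤ m) {s : ℝ} (hs : 1 < s) :
    HasDerivAt (fun x : ℝ => (2 / (m : ℝ)) * Real.arctan (Real.sqrt (x ^ m - 1)))
      (1 / (s * Real.sqrt (s ^ m - 1))) s := by
  have hs0 : (0:ℝ) < s := lt_trans one_pos hs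
  have hpow : (1:ℝ) < s ^ m := one_lt_pow₀ hs (by omega)
  have h1 : (0:ℝ) < s ^ m - 1 := by linarith
  have hm0 : (0:ℝ) < (m:ℝ) := by exact_mod_cast hm
  have hd1 : HasDerivAt (fun x : ℝ => x ^ m - 1) ((m : ℝ) * s ^ (m - 1)) s := by
    simpa using ((hasDerivAt_pow m s).sub_const 1)
  have hd2 : HasDerivAt (fun x : ℝ => Real.sqrt (x ^ m - 1))
      ((m : ℝ) * s ^ (m - 1) / (2 * Real.sqrt (s ^ m - 1))) s :=
    (Real.hasDerivAt_sqrt (ne_of_gt h1)).comp s hd1 |>.congr_deriv (by ring)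
  have hd3 := ((Real.hasDerivAt_arctan (Real.sqrt (s ^ m - 1))).comp s hd2).const_mul
      (2 / (m : ℝ))
  refine HasDerivAt.congr_deriv hd3 ?_
  symm
  have hsq : Real.sqrt (s ^ m - 1) ^ 2 = s ^ m - 1 := Real.sq_sqrt h1.le
  have hsqrt_pos : 0 < Real.sqrt (s ^ m - 1) := Real.sqrt_pos.2 h1
  rw [hsq]
  have hsm : s ^ (m-1) * s = s ^ m := by
    rw [← pow_succ]; congr 1; omega
  field_simp
  rw [← hsm]; ring

lemma measurable_f (m : ℕ) : Measurable (fun s : ℝ => 1 / (s * Real.sqrt (s ^ m - 1))) := by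
  have h1 : Measurable fun s : ℝ => s ^ m - 1 := (measurable_id.pow_const m).sub_const 1
  exact measurable_const.div (measurable_id.mul (Real.continuous_sqrt.measurable.comp h1))

lemma f_le_near_one (m : ℕ) (hm : 2 ≤ m) {s : ℝ} (hs1 : 1 < s) :
    1 / (s * Real.sqrt (s ^ m - 1)) ≤ (s - 1) ^ (-(1:ℝ)/2) := by
  have h1 : (0:ℝ) < s - 1 := by linarith
  have hsm : s - 1 ≤ s ^ m - 1 := by
    have : s ≤ s ^ m := le_self_pow₀ (by linarith) (by omega)
    linarith
  have h2 : Real.sqrt (s - 1) ≤ Real.sqrt (s ^ m - 1) := Real.sqrt_le_sqrt hsm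
  have h3 : Real.sqrt (s - 1) ≤ s * Real.sqrt (s ^ m - 1) := by
    nlinarith [Real.sqrt_nonneg (s ^ m - 1)]
  have h4 : (s - 1) ^ (-(1:ℝ)/2) = 1 / Real.sqrt (s - 1) := by
    rw [neg_div, Real.rpow_neg h1.le, Real.sqrt_eq_rpow]; norm_num
  rw [h4]
  exact one_div_le_one_div_of_le (Real.sqrt_pos.2 h1) h3

lemma integrableOn_f (m : ℕ) (hm : 2 ≤ m) :
    IntegrableOn (fun s : ℝ => 1 / (s * Real.sqrt (s ^ m - 1))) (Ioi 1) := by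
  rw [show Ioi (1:ℝ) = Ioc 1 2 ∪ Ioi 2 by rw [Set.Ioc_union_Ioi_eq_Ioi]; norm_num]
  apply IntegrableOn.union
  · have hint : IntegrableOn (fun s : ℝ => (s - 1) ^ (-(1:ℝ)/2)) (Ioc 1 2) := by
      have h := (intervalIntegral.intervalIntegrable_rpow'
        (a := 0) (b := 1) (r := -(1:ℝ)/2) (by norm_num)).comp_sub_right 1
      rw [intervalIntegrable_iff_integrableOn_Ioc_of_le (by norm_num)] at h
      norm_num at h ⊢; exact h
    refine hint.integrable.mono (measurable_f m).aestronglyMeasurable.restrict ?_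
    filter_upwards [ae_restrict_mem measurableSet_Ioc] with s hs
    have hs1 : (1:ℝ) < s := hs.1
    have h1 : (0:ℝ) < s - 1 := by linarith
    rw [Real.norm_eq_abs, Real.norm_eq_abs, abs_of_nonneg (by positivity),
      abs_of_nonneg (Real.rpow_nonneg h1.le _)]
    exact f_le_near_one m hm hs1
  · have hint : IntegrableOn (fun s : ℝ => Real.sqrt 2 * s ^ (-2:ℝ)) (Ioi 2) :=
      (integrableOn_Ioi_rpow_of_lt (by norm_num) (by norm_num)).const_mul _
    refine hint.integrable.mono (measurable_f m).aestronglyMeasurable.restrict ?_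
    filter_upwards [ae_restrict_mem measurableSet_Ioi] with s hs
    have hs2 : (2:ℝ) < s := hs
    have hs0 : (0:ℝ) < s := by linarith
    have hsq : s ^ 2 ≤ s ^ m := pow_le_pow_right₀ (by linarith) hm
    have hge : (2:ℝ) ≤ s ^ 2 / 2 := by nlinarith
    have hsm : s ^ 2 / 2 ≤ s ^ m - 1 := by nlinarith
    have h2 : Real.sqrt (s ^ 2 / 2) ≤ Real.sqrt (s ^ m - 1) := Real.sqrt_le_sqrt hsm
    have h2' : s / Real.sqrt 2 ≤ Real.sqrt (s ^ m - 1) := by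
      rwa [Real.sqrt_div (by positivity : (0:ℝ) ≤ s ^ 2), Real.sqrt_sq hs0.le] at h2
    rw [Real.norm_eq_abs, Real.norm_eq_abs, abs_of_nonneg (by positivity),
      abs_of_nonneg (by positivity)]
    have hsqrt2 : (0:ℝ) < Real.sqrt 2 := by positivity
    have hXpos : (0:ℝ) < Real.sqrt (s ^ m - 1) := lt_of_lt_of_le (by positivity) h2'
    have hrw : s ^ (-2:ℝ) = 1 / s ^ 2 := by
      rw [Real.rpow_neg hs0.le, one_div, show (2:ℝ) = ((2:ℕ):ℝ) by norm_num,
        Real.rpow_natCast]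
    rw [hrw]
    calc 1 / (s * Real.sqrt (s ^ m - 1)) ≤ 1 / (s * (s / Real.sqrt 2)) :=
          one_div_le_one_div_of_le (by positivity)
            (mul_le_mul_of_nonneg_left h2' hs0.le)
      _ = Real.sqrt 2 * (1 / s ^ 2) := by field_simp

lemma integral_f (m : ℕ) (hm : 2 ≤ m) :
    ∫ s in Ioi (1:ℝ), 1 / (s * Real.sqrt (s ^ m - 1)) = π / m := by
  have hm0 : (0:ℝ) < (m:ℝ) := by positivity
  have hcont : ContinuousWithinAt
      (fun x : ℝ => (2 / (m : ℝ)) * Real.arctan (Real.sqrt (x ^ m - 1))) (Ici 1) 1 := by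
    apply Continuous.continuousWithinAt
    exact continuous_const.mul (Real.continuous_arctan.comp
      (Real.continuous_sqrt.comp ((continuous_pow m).sub continuous_const)))
  have htop : Tendsto (fun x : ℝ => (2 / (m : ℝ)) * Real.arctan (Real.sqrt (x ^ m - 1)))
      atTop (nhds ((2 / (m : ℝ)) * (π / 2))) := by
    apply Tendsto.const_mul
    apply (tendsto_nhds_of_tendsto_nhdsWithin Real.tendsto_arctan_atTop).comp
    have hsqrt : Tendsto Real.sqrt atTop atTop := by
      refine (tendsto_rpow_atTop (show (0:ℝ) < 1/2 by norm_num)).congr' ?_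
      filter_upwards [eventually_ge_atTop (0:ℝ)] with x hx
      rw [← Real.sqrt_eq_rpow]
    apply hsqrt.comp
    apply tendsto_atTop_add_const_right
    exact tendsto_pow_atTop (by omega)
  have := integral_Ioi_of_hasDerivAt_of_tendsto hcont
    (fun x hx => hasDeriv_aux m (by omega) hx) (integrableOn_f m hm) htop
  rw [this]
  simp only [one_pow, sub_self, Real.sqrt_zero, Real.arctan_zero, mul_zero, sub_zero]
  field_simp

lemma tendsto_cosh_atTop' : Tendsto Real.cosh atTop atTop := by
  apply tendsto_atTop_mono (f := fun x => Real.exp x / 2)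
  · intro x
    rw [Real.cosh_eq]
    have := Real.exp_pos (-x)
    linarith
  · exact Real.tendsto_exp_atTop.atTop_div_const (by norm_num)

theorem main_aux (m : ℕ) (hm : 2 ≤ m) :
    Tendsto (fun a : ℝ => Real.cosh a * (∫ s in Set.Ioi (1:ℝ),
        1 / (Real.sqrt (s ^ m - 1) * Real.sqrt (Real.cosh a ^ 2 * s ^ 2 - 1))))
      atTop (nhds (π / m)) := by
  rw [← integral_f m hm]
  simp_rw [← MeasureTheory.integral_const_mul]
  apply MeasureTheory.tendsto_integral_filter_of_dominated_convergence
    (bound := fun s => Real.sqrt 2 * (1 / (s * Real.sqrt (s ^ m - 1))))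
  · -- measurability
    filter_upwards with a
    have h1 : Measurable fun s : ℝ => Real.sqrt (s ^ m - 1) :=
      Real.continuous_sqrt.measurable.comp ((measurable_id.pow_const m).sub_const 1)
    have h2 : Measurable fun s : ℝ => Real.sqrt (Real.cosh a ^ 2 * s ^ 2 - 1) :=
      Real.continuous_sqrt.measurable.comp
        (((measurable_id.pow_const 2).const_mul _).sub_const 1)
    exact (measurable_const.mul (measurable_const.div (h1.mul h2))).aestronglyMeasurable
  · -- bound
    filter_upwards [tendsto_cosh_atTop'.eventually_ge_atTop 2] with a ha
    filter_upwards [ae_restrict_mem measurableSet_Ioi] with s hs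
    have hs1 : (1:ℝ) < s := hs
    have hs0 : (0:ℝ) < s := by linarith
    have hA : (0:ℝ) < s ^ m - 1 := by
      have : (1:ℝ) < s ^ m := one_lt_pow₀ hs1 (by omega)
      linarith
    set c := Real.cosh a with hc
    have hc0 : (0:ℝ) < c := by rw [hc]; exact Real.cosh_pos a
    have hcs : 2 ≤ c * s := by nlinarith
    have hB2 : c ^ 2 * s ^ 2 / 2 ≤ c ^ 2 * s ^ 2 - 1 := by nlinarith
    have hBpos : (0:ℝ) < c ^ 2 * s ^ 2 - 1 := by nlinarith
    have hsqB : c * s / Real.sqrt 2 ≤ Real.sqrt (c ^ 2 * s ^ 2 - 1) := by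
      have h := Real.sqrt_le_sqrt hB2
      rwa [show c ^ 2 * s ^ 2 / 2 = (c * s) ^ 2 / 2 by ring,
        Real.sqrt_div (by positivity) 2, Real.sqrt_sq (by positivity)] at h
    have hkey : c * s ≤ Real.sqrt 2 * Real.sqrt (c ^ 2 * s ^ 2 - 1) := by
      have h2 : (0:ℝ) < Real.sqrt 2 := by positivity
      calc c * s = Real.sqrt 2 * (c * s / Real.sqrt 2) := by field_simp
        _ ≤ _ := by nlinarith
    rw [Real.norm_eq_abs, abs_of_nonneg (by positivity)]
    rw [mul_one_div, mul_one_div, div_le_div_iff₀ (by positivity) (by positivity)]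
    have hsA : (0:ℝ) ≤ Real.sqrt (s ^ m - 1) := Real.sqrt_nonneg _
    nlinarith [mul_le_mul_of_nonneg_right hkey hsA]
  · exact (integrableOn_f m hm).const_mul _
  · -- pointwise limit
    filter_upwards [ae_restrict_mem measurableSet_Ioi] with s hs
    have hs1 : (1:ℝ) < s := hs
    have hs0 : (0:ℝ) < s := by linarith
    have hA : (0:ℝ) < s ^ m - 1 := by
      have : (1:ℝ) < s ^ m := one_lt_pow₀ hs1 (by omega)
      linarith
    have hg : Tendsto (fun a : ℝ => (1 / Real.sqrt (s ^ m - 1)) *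
        (1 / Real.sqrt (s ^ 2 - ((Real.cosh a) ^ 2)⁻¹))) atTop
        (nhds (1 / (s * Real.sqrt (s ^ m - 1)))) := by
      have hinv : Tendsto (fun a : ℝ => ((Real.cosh a) ^ 2)⁻¹) atTop (nhds 0) :=
        tendsto_inv_atTop_zero.comp ((tendsto_pow_atTop two_ne_zero).comp tendsto_cosh_atTop')
      have hsub : Tendsto (fun a : ℝ => s ^ 2 - ((Real.cosh a) ^ 2)⁻¹) atTop
          (nhds (s ^ 2)) := by
        simpa using tendsto_const_nhds.sub hinv
      have hcontAt : ContinuousAt (fun t : ℝ => 1 / Real.sqrt t) (s ^ 2) := by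
        apply ContinuousAt.div continuousAt_const Real.continuous_sqrt.continuousAt
        positivity
      have := hcontAt.tendsto.comp hsub
      simp only [Function.comp_def] at this
      convert this.const_mul (1 / Real.sqrt (s ^ m - 1)) using 2
      rw [Real.sqrt_sq hs0.le]
      field_simp
    apply hg.congr
    intro a
    set c := Real.cosh a with hc
    have hc1 : (1:ℝ) ≤ c := Real.one_le_cosh a
    have hc0 : (0:ℝ) < c := by linarith
    have hBpos : (0:ℝ) < c ^ 2 * s ^ 2 - 1 := by
      have h1 : (1:ℝ) ≤ c ^ 2 := by nlinarith
      have h2 : (1:ℝ) < s ^ 2 := by nlinarith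
      nlinarith
    have hrw : Real.sqrt (s ^ 2 - (c ^ 2)⁻¹) = Real.sqrt (c ^ 2 * s ^ 2 - 1) / c := by
      rw [show s ^ 2 - (c ^ 2)⁻¹ = (c ^ 2 * s ^ 2 - 1) / c ^ 2 by field_simp,
        Real.sqrt_div hBpos.le, Real.sqrt_sq hc0.le]
    rw [hrw]
    have hsq : (0:ℝ) < Real.sqrt (c ^ 2 * s ^ 2 - 1) := Real.sqrt_pos.2 hBpos
    have hsA : (0:ℝ) < Real.sqrt (s ^ m - 1) := Real.sqrt_pos.2 hA
    field_simp

/-- T(a) → π/(2n−2) as a → +∞. -/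
theorem md_asymptotic_height_tendsto_pi (n : ℕ) (hn : 2 ≤ n) :
    Tendsto (fun a : ℝ => Real.cosh a * (∫ s in Set.Ioi (1:ℝ),
        1 / (Real.sqrt (s ^ (2 * n - 2) - 1) * Real.sqrt (Real.cosh a ^ 2 * s ^ 2 - 1))))
      atTop (nhds (Real.pi / (2 * (n : ℝ) - 2))) := by
  have hcast : ((2 * n - 2 : ℕ) : ℝ) = 2 * (n : ℝ) - 2 := by
    have h : 2 ≤ 2 * n := by omega
    push_cast [Nat.cast_sub h]
    ring
  rw [show Real.pi / (2 * (n : ℝ) - 2) = π / ((2 * n - 2 : ℕ) : ℝ) by rw [hcast]]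
  exact main_aux (2 * n - 2) (by omega)
end

section
/- For n ≥ 2 and fixed a > 0, the function ρ ↦ λ(a,ρ) = ∫_a^ρ d/√(cosh(u)^(2n−2) − d²) du with d = cosh(a)^(n−1) extends continuously to ρ = a with λ(a,a) = 0, is C¹ on (a,∞), and its derivative d/√(cosh(ρ)^(2n−2) − d²) tends to +∞ as ρ → a⁺ (so the generating curve of M_d, d>1, meets the level ρ = a with vertical tangent). -/
open Real MeasureTheory intervalIntegral Filter

lemma cosh_lower_aux (a u : ℝ) : Real.cosh a + (u - a) * Real.sinh a ≤ Real.cosh u := by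
  rw [Real.cosh_eq, Real.cosh_eq, Real.sinh_eq]
  have h1 : (u - a) + 1 ≤ Real.exp (u - a) := Real.add_one_le_exp _
  have h2 : (a - u) + 1 ≤ Real.exp (a - u) := Real.add_one_le_exp _
  have e1 : Real.exp u = Real.exp a * Real.exp (u - a) := by rw [← Real.exp_add]; ring_nf
  have e2 : Real.exp (-u) = Real.exp (-a) * Real.exp (a - u) := by rw [← Real.exp_add]; ring_nf
  have p1 := Real.exp_pos a
  have p2 := Real.exp_pos (-a)
  nlinarith

lemma pow_sub_pow_ge_aux (k : ℕ) (hk : 1 ≤ k) (s t : ℝ) (hs : 0 ≤ s) (hst : s ≤ t) :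
    s ^ (k - 1) * (t - s) ≤ t ^ k - s ^ k := by
  have ht : (0:ℝ) ≤ t := hs.trans hst
  have h1 : s ^ (k - 1) ≤ t ^ (k - 1) := pow_le_pow_left₀ hs hst _
  have e : k - 1 + 1 = k := Nat.succ_pred_eq_of_pos hk
  have e1 : s ^ (k - 1) * s = s ^ k := by rw [← pow_succ, e]
  have e2 : t ^ (k - 1) * t = t ^ k := by rw [← pow_succ, e]
  nlinarith [mul_le_mul_of_nonneg_right h1 ht]

lemma key_lower (n : ℕ) (hn : 2 ≤ n) (a u : ℝ) (ha : 0 < a) (hau : a ≤ u) :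
    Real.cosh a ^ (2 * n - 3) * Real.sinh a * (u - a)
      ≤ Real.cosh u ^ (2 * n - 2) - (Real.cosh a ^ (n - 1)) ^ 2 := by
  have hs : 0 < Real.sinh a := Real.sinh_pos_iff.2 ha
  have hc : (0:ℝ) < Real.cosh a := Real.cosh_pos a
  have hcu : Real.cosh a ≤ Real.cosh u := by
    have := cosh_lower_aux a u
    nlinarith
  have hsq : (Real.cosh a ^ (n - 1)) ^ 2 = Real.cosh a ^ (2 * n - 2) := by
    rw [← pow_mul]
    congr 1
    omega
  rw [hsq]
  have hk : 1 ≤ 2 * n - 2 := by omega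
  have h1 := pow_sub_pow_ge_aux (2 * n - 2) hk (Real.cosh a) (Real.cosh u) hc.le hcu
  have e3 : 2 * n - 2 - 1 = 2 * n - 3 := by omega
  rw [e3] at h1
  have h2 : (u - a) * Real.sinh a ≤ Real.cosh u - Real.cosh a := by
    have := cosh_lower_aux a u; linarith
  have hpow : (0:ℝ) < Real.cosh a ^ (2 * n - 3) := pow_pos hc _
  nlinarith [mul_le_mul_of_nonneg_left h2 hpow.le]

/-- For d = cosh(a)^{n−1} > 1, the height function λ(a,ρ) = ∫_a^ρ d/√(cosh u^(2n−2) − d²) du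
vanishes at ρ = a and extends continuously there, is C¹ on (a,∞) with derivative
d/√(cosh ρ^(2n−2) − d²), and this derivative blows up to +∞ as ρ → a⁺
(vertical tangent of the generating curve). -/
theorem md_generating_curve_vertical_tangent (n : ℕ) (hn : 2 ≤ n) (a : ℝ) (ha : 0 < a) :
    (∫ u in a..a, Real.cosh a ^ (n - 1) /
        Real.sqrt (Real.cosh u ^ (2 * n - 2) - (Real.cosh a ^ (n - 1)) ^ 2)) = 0 ∧
    ContinuousWithinAt (fun ρ : ℝ => ∫ u in a..ρ, Real.cosh a ^ (n - 1) /
        Real.sqrt (Real.cosh u ^ (2 * n - 2) - (Real.cosh a ^ (n - 1)) ^ 2))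
      (Set.Ici a) a ∧
    (∀ ρ ∈ Set.Ioi a, HasDerivAt
      (fun ρ : ℝ => ∫ u in a..ρ, Real.cosh a ^ (n - 1) /
        Real.sqrt (Real.cosh u ^ (2 * n - 2) - (Real.cosh a ^ (n - 1)) ^ 2))
      (Real.cosh a ^ (n - 1) /
        Real.sqrt (Real.cosh ρ ^ (2 * n - 2) - (Real.cosh a ^ (n - 1)) ^ 2)) ρ) ∧
    Tendsto (fun ρ : ℝ => Real.cosh a ^ (n - 1) /
        Real.sqrt (Real.cosh ρ ^ (2 * n - 2) - (Real.cosh a ^ (n - 1)) ^ 2))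
      (nhdsWithin a (Set.Ioi a)) atTop := by
  set d : ℝ := Real.cosh a ^ (n - 1) with hd_def
  set f : ℝ → ℝ := fun u => d / Real.sqrt (Real.cosh u ^ (2 * n - 2) - d ^ 2) with hf_def
  have hd : 0 < d := pow_pos (Real.cosh_pos _) _
  set m : ℝ := Real.cosh a ^ (2 * n - 3) * Real.sinh a with hm_def
  have hm : 0 < m := mul_pos (pow_pos (Real.cosh_pos _) _) (Real.sinh_pos_iff.2 ha)
  have key : ∀ u, a ≤ u → m * (u - a) ≤ Real.cosh u ^ (2 * n - 2) - d ^ 2 :=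
    fun u hu => key_lower n hn a u ha hu
  -- measurability
  have hcont : Continuous fun u : ℝ => Real.sqrt (Real.cosh u ^ (2 * n - 2) - d ^ 2) :=
    Real.continuous_sqrt.comp ((Real.continuous_cosh.pow _).sub continuous_const)
  have hmeas : Measurable f := measurable_const.div hcont.measurable
  -- integrability on [a, b] for a ≤ b
  have hint : ∀ b, a ≤ b → IntervalIntegrable f volume a b := by
    intro b hb
    rw [intervalIntegrable_iff_integrableOn_Ioc_of_le hb]
    -- dominating function
    have hbase : IntervalIntegrable (fun x : ℝ => x ^ (-(1/2) : ℝ)) volume 0 (b - a) :=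
      intervalIntegral.intervalIntegrable_rpow' (by norm_num)
    have hshift : IntervalIntegrable (fun x : ℝ => (x - a) ^ (-(1/2) : ℝ)) volume a b := by
      have := hbase.comp_sub_right a
      simpa using this
    have hg0 : IntervalIntegrable (fun x : ℝ => (d / Real.sqrt m) * (x - a) ^ (-(1/2) : ℝ))
        volume a b := hshift.const_mul _
    rw [intervalIntegrable_iff_integrableOn_Ioc_of_le hb] at hg0
    refine hg0.integrable.mono' (hmeas.aestronglyMeasurable) ?_
    rw [ae_restrict_iff' measurableSet_Ioc]
    filter_upwards with x hx
    have hxa : a < x := hx.1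
    have hpos : 0 < m * (x - a) := mul_pos hm (by linarith)
    have hle : m * (x - a) ≤ Real.cosh x ^ (2 * n - 2) - d ^ 2 := key x hxa.le
    have hs1 : 0 < Real.sqrt (m * (x - a)) := Real.sqrt_pos.2 hpos
    have hs2 : Real.sqrt (m * (x - a)) ≤ Real.sqrt (Real.cosh x ^ (2 * n - 2) - d ^ 2) :=
      Real.sqrt_le_sqrt hle
    have hfx : f x ≤ d / Real.sqrt (m * (x - a)) := by
      apply div_le_div_of_nonneg_left hd.le hs1
      exact hs2
    have hfx0 : 0 ≤ f x := div_nonneg hd.le (Real.sqrt_nonneg _)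
    rw [Real.norm_of_nonneg hfx0]
    calc f x ≤ d / Real.sqrt (m * (x - a)) := hfx
      _ = (d / Real.sqrt m) * (x - a) ^ (-(1/2) : ℝ) := by
          rw [Real.sqrt_mul hm.le, div_mul_eq_div_div, div_eq_mul_inv,
            Real.rpow_neg (by linarith), ← Real.sqrt_eq_rpow]
  refine ⟨intervalIntegral.integral_same, ?_, ?_, ?_⟩
  · -- continuity within Ici a at a
    have h2 : ContinuousWithinAt (fun ρ : ℝ => ∫ u in a..ρ, f u) (Set.Icc a (a + 1)) a := by
      apply intervalIntegral.continuousWithinAt_primitive (measure_singleton a)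
      rw [min_self]
      exact hint _ (by linarith [le_max_right a (a+1)])
    apply h2.mono_of_mem_nhdsWithin
    rw [← Set.Ici_inter_Iic]
    exact Filter.inter_mem self_mem_nhdsWithin
      (mem_nhdsWithin_of_mem_nhds (Iic_mem_nhds (by linarith)))
  · -- derivative on Ioi a
    intro ρ hρ
    have hρa : a < ρ := hρ
    have hposρ : 0 < Real.cosh ρ ^ (2 * n - 2) - d ^ 2 := by
      have := key ρ hρa.le
      nlinarith
    have hsne : Real.sqrt (Real.cosh ρ ^ (2 * n - 2) - d ^ 2) ≠ 0 :=
      ne_of_gt (Real.sqrt_pos.2 hposρ)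
    exact intervalIntegral.integral_hasDerivAt_right (hint ρ hρa.le)
      (hmeas.stronglyMeasurable.stronglyMeasurableAtFilter)
      (ContinuousAt.div continuousAt_const hcont.continuousAt hsne)
  · -- blow-up
    have hden : Tendsto (fun ρ : ℝ => Real.sqrt (Real.cosh ρ ^ (2 * n - 2) - d ^ 2))
        (nhdsWithin a (Set.Ioi a)) (nhdsWithin 0 (Set.Ioi 0)) := by
      apply tendsto_nhdsWithin_of_tendsto_nhds_of_eventually_within
      · have h0 : Real.sqrt (Real.cosh a ^ (2 * n - 2) - d ^ 2) = 0 := by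
          have : Real.cosh a ^ (2 * n - 2) - d ^ 2 = 0 := by
            rw [hd_def, ← pow_mul]
            have : (n - 1) * 2 = 2 * n - 2 := by omega
            rw [this]; ring
          rw [this, Real.sqrt_zero]
        have := (hcont.continuousAt (x := a)).tendsto
        rw [h0] at this
        exact this.mono_left nhdsWithin_le_nhds
      · filter_upwards [self_mem_nhdsWithin] with x hx
        have hxa : a < x := hx
        have := key x hxa.le
        have hpos : 0 < Real.cosh x ^ (2 * n - 2) - d ^ 2 := by nlinarith
        exact Real.sqrt_pos.2 hpos
    have := (tendsto_inv_nhdsGT_zero.comp hden).const_mul_atTop hd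
    simpa [hf_def, div_eq_mul_inv, Function.comp] using this
end
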